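/- arXiv:1107.1063 — 7 statements merged into one kernel-verified Lean document; each statement's English description precedes it below -/
import Mathlib

section
/- For all integers m and r with 0 ≤ r and 2r + 2 ≤ m, one has S(m,r) = T(m−1−r, r) = U(m−1−r, r) = W(m−1−r, r), and if moreover r ≥ 1, these quantities also equal V(m−1−r, r). -/
open Finset

/-- `S n r = ∑_{i=r+1}^{⌊n/2⌋} C(n,2i)·C(i−1,r)`. -/
def S (n r : ℕ) : ℕ := ∑ i ∈ Icc (r + 1) (n / 2), n.choose (2 * i) * (i - 1).choose r

/-- `T n r = ∑_{j=r+1}^{n} C(n,j)·C(j−1,r)`. -/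
def T (n r : ℕ) : ℕ := ∑ j ∈ Icc (r + 1) n, n.choose j * (j - 1).choose r

/-- `U n r = ∑_{j=r+1}^{n} C(j−1,r)·2^{j−1−r}`. -/
def U (n r : ℕ) : ℕ := ∑ j ∈ Icc (r + 1) n, (j - 1).choose r * 2 ^ (j - 1 - r)

/-- `V n r = ∑_{j=1}^{n−r} C(n−1−j,r−1)·2^{n−r−j}·(2^j−1)`. -/
def V (n r : ℕ) : ℕ :=
  ∑ j ∈ Icc 1 (n - r), (n - 1 - j).choose (r - 1) * 2 ^ (n - r - j) * (2 ^ j - 1)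

/-- `W n r = 2^{n−r}·∑_{k=0}^{⌊r/2⌋} C(n−2−2k,r−2k) + (−1)^{r+1}` as an integer. -/
def W (n r : ℕ) : ℤ :=
  2 ^ (n - r) * ∑ k ∈ range (r / 2 + 1), ((n - 2 - 2 * k).choose (r - 2 * k) : ℤ)
    + (-1) ^ (r + 1)

-- R1
lemma U_succ (n r : ℕ) : U (n + 1) r = U n r + n.choose r * 2 ^ (n - r) := by
  rcases le_or_gt (r + 1) (n + 1) with h | h
  · rw [U, Finset.sum_Icc_succ_top h]
    simp [U]
  · have hn : n < r := by omega
    have : n.choose r = 0 := Nat.choose_eq_zero_of_lt hn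
    rw [U, U, this]
    rw [Icc_eq_empty (by omega), Icc_eq_empty (by omega)]
    simp


-- K1'
lemma sum_choose_mul_choose (n r : ℕ) (h : r ≤ n) :
    ∑ i ∈ Icc r n, n.choose i * i.choose r = n.choose r * 2 ^ (n - r) := by
  have h1 : ∀ i ∈ Icc r n, n.choose i * i.choose r = n.choose r * (n - r).choose (i - r) := by
    intro i hi
    rw [mem_Icc] at hi
    exact Nat.choose_mul hi.1
  rw [Finset.sum_congr rfl h1, ← Finset.mul_sum]
  congr 1
  have : ∑ i ∈ Icc r n, (n - r).choose (i - r) = ∑ t ∈ range (n - r + 1), (n - r).choose t := by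
    rw [show Icc r n = Icc (0 + r) ((n - r) + r) by congr 1 <;> omega,
      ← Finset.map_add_right_Icc, Finset.sum_map]
    simp only [addRightEmbedding_apply, Nat.add_sub_cancel]
    rw [range_eq_Ico, Finset.Ico_add_one_right_eq_Icc]
  rw [this, Nat.sum_range_choose]

lemma TU (n r : ℕ) : T n r = U n r := by
  induction n with
  | zero => simp [T, U, Icc_eq_empty (by omega : ¬ (r + 1 ≤ 0))]
  | succ n ih =>
    rcases le_or_gt r n with h | h
    · have pascal : ∀ j ∈ Icc (r + 1) (n + 1),
          (n+1).choose j * (j-1).choose r = n.choose (j-1) * (j-1).choose r + n.choose j * (j-1).choose r := by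
        intro j hj
        rw [mem_Icc] at hj
        obtain ⟨k, rfl⟩ : ∃ k, j = k + 1 := ⟨j - 1, by omega⟩
        rw [Nat.choose_succ_succ]
        simp [Nat.add_mul]
      rw [T, Finset.sum_congr rfl pascal, Finset.sum_add_distrib]
      have e1 : ∑ j ∈ Icc (r+1) (n+1), n.choose (j-1) * (j-1).choose r
          = ∑ i ∈ Icc r n, n.choose i * i.choose r := by
        rw [show Icc (r+1) (n+1) = Icc (r+1) (n+1) from rfl]
        rw [show (r+1) = r + 1 from rfl]
        rw [← Finset.map_add_right_Icc r n 1, Finset.sum_map]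
        simp
      have e2 : ∑ j ∈ Icc (r+1) (n+1), n.choose j * (j-1).choose r = T n r := by
        rw [T]
        apply (Finset.sum_subset (Finset.Icc_subset_Icc_right (by omega)) _).symm
        intro x hx hx'
        rw [mem_Icc] at hx hx'
        have : x = n + 1 := by omega
        subst this
        simp [Nat.choose_succ_self]
      rw [e1, e2, sum_choose_mul_choose n r h, ih, U_succ, Nat.add_comm]
    · rw [T, U, Icc_eq_empty (by omega : ¬ (r+1 ≤ n+1))]
      simp

-- K2
lemma U_add_U (n r : ℕ) (hr : 1 ≤ r) : U n r + U n (r - 1) = n.choose r * 2 ^ (n - r) := by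
  induction n with
  | zero =>
    rw [U, U, Icc_eq_empty (by omega : ¬ (r+1 ≤ 0)), Icc_eq_empty (by omega : ¬ (r-1+1 ≤ 0))]
    simp [Nat.choose_eq_zero_of_lt hr]
  | succ n ih =>
    rw [U_succ, U_succ]
    rcases le_or_gt r n with h | h
    · have e1 : n - (r - 1) = n - r + 1 := by omega
      have e2 : n + 1 - r = n - r + 1 := by omega
      rw [show U n r + n.choose r * 2 ^ (n - r) + (U n (r-1) + n.choose (r-1) * 2 ^ (n - (r-1)))
          = (U n r + U n (r-1)) + (n.choose r * 2 ^ (n - r) + n.choose (r-1) * 2 ^ (n - (r-1))) by ring,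
        ih, e1, e2]
      have pascal : (n+1).choose r = n.choose (r-1) + n.choose r := by
        obtain ⟨s, rfl⟩ : ∃ s, r = s + 1 := ⟨r - 1, by omega⟩
        rw [Nat.choose_succ_succ]
        simp
      rw [pascal]
      ring
    · have hU1 : U n r = 0 := by rw [U, Icc_eq_empty (by omega : ¬ (r+1 ≤ n))]; rfl
      have hU2 : U n (r - 1) = 0 := by rw [U, Icc_eq_empty (by omega : ¬ (r-1+1 ≤ n))]; rfl
      rw [hU1, hU2, Nat.choose_eq_zero_of_lt h]
      rcases eq_or_lt_of_le (by omega : n ≤ r - 1) with h2 | h2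
      · rw [show r - 1 = n from h2.symm, Nat.choose_self, show n + 1 = r by omega, Nat.choose_self]
        simp
      · rw [Nat.choose_eq_zero_of_lt (by omega : n < r - 1),
          Nat.choose_eq_zero_of_lt (by omega : n + 1 < r)]
        simp

-- K2b
lemma U_add_U' (n r : ℕ) (hr : 1 ≤ r) (hn : 1 ≤ n) :
    U n r + U (n - 1) (r - 1) = (n - 1).choose r * 2 ^ (n - r) := by
  have k2 := U_add_U n r hr
  have r1 := U_succ (n - 1) (r - 1)
  rw [show n - 1 + 1 = n by omega, show n - 1 - (r - 1) = n - r by omega] at r1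
  have pascal : n.choose r = (n - 1).choose (r - 1) + (n - 1).choose r := by
    obtain ⟨a, rfl⟩ : ∃ a, n = a + 1 := ⟨n - 1, by omega⟩
    obtain ⟨b, rfl⟩ : ∃ b, r = b + 1 := ⟨r - 1, by omega⟩
    simp [Nat.choose_succ_succ]
  rw [pascal, Nat.add_mul] at k2
  omega


lemma UV (n r : ℕ) (hr : 1 ≤ r) (hn : r + 1 ≤ n) : U n r = V n r := by
  have e1 : U (n - 1) (r - 1) = ∑ j ∈ Icc 1 (n - r), (n - 1 - j).choose (r - 1) * 2 ^ (n - r - j) := by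
    rw [U]
    apply Finset.sum_nbij' (fun i => n - i) (fun j => n - j)
    · intro a ha; rw [mem_Icc] at *; omega
    · intro a ha; rw [mem_Icc] at *; omega
    · intro a ha; rw [mem_Icc] at ha; omega
    · intro a ha; rw [mem_Icc] at ha; omega
    · intro a ha
      rw [mem_Icc] at ha
      rw [show n - 1 - (n - a) = a - 1 by omega, show n - r - (n - a) = a - 1 - (r - 1) by omega]
  have key : V n r + U (n - 1) (r - 1) = (n - 1).choose r * 2 ^ (n - r) := by
    rw [V, e1, ← Finset.sum_add_distrib]
    have term : ∀ j ∈ Icc 1 (n - r),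
        (n - 1 - j).choose (r - 1) * 2 ^ (n - r - j) * (2 ^ j - 1)
          + (n - 1 - j).choose (r - 1) * 2 ^ (n - r - j)
        = (n - 1 - j).choose (r - 1) * 2 ^ (n - r) := by
      intro j hj
      rw [mem_Icc] at hj
      have h2 : 2 ^ (n - r - j) * 2 ^ j = 2 ^ (n - r) := by
        rw [← pow_add]; congr 1; omega
      have h1 : (1:ℕ) ≤ 2 ^ j := Nat.one_le_two_pow
      rw [mul_assoc, ← Nat.mul_add, Nat.mul_sub, mul_one,
        Nat.sub_add_cancel (Nat.le_mul_of_pos_right _ (by positivity)), h2]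
    rw [Finset.sum_congr rfl term, ← Finset.sum_mul]
    congr 1
    have e2 : ∑ j ∈ Icc 1 (n - r), (n - 1 - j).choose (r - 1)
        = ∑ i ∈ Icc (r - 1) (n - 2), i.choose (r - 1) := by
      apply Finset.sum_nbij' (fun j => n - 1 - j) (fun i => n - 1 - i)
      · intro a ha; rw [mem_Icc] at *; omega
      · intro a ha; rw [mem_Icc] at *; omega
      · intro a ha; rw [mem_Icc] at ha; omega
      · intro a ha; rw [mem_Icc] at ha; omega
      · intro a ha; rfl
    rw [e2, Nat.sum_Icc_choose, show n - 2 + 1 = n - 1 by omega, show r - 1 + 1 = r by omega]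
  have k2b := U_add_U' n r hr (by omega)
  omega

def P (n r : ℕ) : ℕ := ∑ k ∈ range (r / 2 + 1), (n - 2 - 2 * k).choose (r - 2 * k)

lemma P_zero (n : ℕ) : P n 0 = 1 := by simp [P]

lemma P_one (n : ℕ) : P n 1 = (n - 2).choose 1 := by simp [P]

lemma P_rec (n r : ℕ) : P n (r + 2) = (n - 2).choose (r + 2) + P (n - 2) r := by
  rw [P, P, show (r + 2) / 2 + 1 = (r / 2 + 1) + 1 by omega, Finset.sum_range_succ']
  rw [Nat.add_comm]
  congr 1
  apply Finset.sum_congr rfl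
  intro k _
  congr 1 <;> omega

-- Q
lemma P_doubling : ∀ r n : ℕ, r + 1 ≤ n → 2 * P (n + 1) r = P n r + n.choose r := by
  intro r
  induction r using Nat.twoStepInduction with
  | zero => intro n hn; simp [P_zero]
  | one => intro n hn; simp [P_one, Nat.choose_one_right]; omega
  | more r ih _ =>
    intro n hn
    obtain ⟨a, rfl⟩ : ∃ a, n = a + 2 := ⟨n - 2, by omega⟩
    rw [P_rec, P_rec, show a + 2 + 1 - 2 = a + 1 by omega, show a + 2 - 2 = a by omega]
    have ih2 := ih a (by omega)
    simp only [Nat.choose_succ_succ, Nat.succ_eq_add_one, show r + 1 + 1 = r + 2 from rfl] at *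
    omega

lemma P_base : ∀ r : ℕ, P (r + 1) r = if r % 2 = 0 then 1 else 0 := by
  intro r
  induction r using Nat.twoStepInduction with
  | zero => simp [P_zero]
  | one => simp [P_one]
  | more r ih _ =>
    rw [show r + 2 + 1 = (r + 1) + 2 by omega, P_rec, show r + 1 + 2 - 2 = r + 1 by omega,
      Nat.choose_eq_zero_of_lt (by omega), ih]
    simp [Nat.add_mod_right]


lemma W_eq (n r : ℕ) : W n r = 2 ^ (n - r) * (P n r : ℤ) + (-1) ^ (r + 1) := by
  rw [W, P]
  push_cast
  ring

lemma UW : ∀ n r : ℕ, r + 1 ≤ n → (U n r : ℤ) = W n r := by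
  intro n r h
  induction n, h using Nat.le_induction with
  | base =>
    have hU : U (r + 1) r = 1 := by
      rw [U, Icc_self, Finset.sum_singleton]
      simp
    rw [hU, W_eq, show r + 1 - r = 1 by omega, P_base]
    rcases Nat.even_or_odd r with he | ho
    · rw [if_pos (Nat.even_iff.mp he), Odd.neg_one_pow (by simpa using he.add_one)]
      norm_num
    · rw [if_neg (by simp [Nat.odd_iff.mp ho]), Even.neg_one_pow (by simpa using ho.add_one)]
      norm_num
  | succ n hn ih =>
    rw [U_succ, W_eq, show n + 1 - r = (n - r) + 1 by omega, pow_succ]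
    have hq := P_doubling r n hn
    have : ((P (n+1) r : ℤ)) * 2 = (P n r : ℤ) + (n.choose r : ℤ) := by
      exact_mod_cast by omega
    rw [W_eq] at ih
    push_cast
    rw [ih]
    linear_combination -(2:ℤ)^(n-r) * this

lemma U_zero (n s : ℕ) (h : n ≤ s) : U n s = 0 := by
  rw [U, Icc_eq_empty (by omega)]; rfl

lemma U_base (s : ℕ) : U (s + 1) s = 1 := by
  rw [U, Icc_self, Finset.sum_singleton]; simp


def auxA (m r : ℕ) : ℕ := ∑ i ∈ Icc (r + 1) ((m + 1) / 2), m.choose (2 * i - 1) * (i - 1).choose r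

def auxB (m r : ℕ) : ℕ := ∑ j ∈ Icc r (m / 2), m.choose (2 * j) * j.choose r

def auxE (m : ℕ) : ℕ := ∑ j ∈ Icc 0 (m / 2), m.choose (2 * j)

def auxO (m : ℕ) : ℕ := ∑ j ∈ Icc 1 ((m + 1) / 2), m.choose (2 * j - 1)

lemma S_succ (m r : ℕ) : S (m + 1) r = S m r + auxA m r := by
  rw [S, show (m + 1) / 2 = (m+1)/2 from rfl]
  have pascal : ∀ i ∈ Icc (r + 1) ((m + 1) / 2),
      (m + 1).choose (2 * i) * (i - 1).choose r
        = m.choose (2 * i - 1) * (i - 1).choose r + m.choose (2 * i) * (i - 1).choose r := by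
    intro i hi
    rw [mem_Icc] at hi
    rw [show 2 * i = (2 * i - 1) + 1 by omega, Nat.choose_succ_succ, Nat.succ_eq_add_one, Nat.add_mul,
      show 2 * i - 1 + 1 = 2 * i by omega]
  rw [Finset.sum_congr rfl pascal, Finset.sum_add_distrib]
  rw [Nat.add_comm (S m r)]
  congr 1
  apply (Finset.sum_subset (Finset.Icc_subset_Icc_right (by omega : m / 2 ≤ (m+1)/2)) ?_).symm
  intro x hx hx'
  rw [mem_Icc] at hx hx'
  rw [Nat.choose_eq_zero_of_lt (by omega : m < 2 * x), Nat.zero_mul]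

lemma A_succ (m r : ℕ) : auxA (m + 1) r = auxA m r + auxB m r := by
  rw [auxA]
  have pascal : ∀ i ∈ Icc (r + 1) ((m + 1 + 1) / 2),
      (m + 1).choose (2 * i - 1) * (i - 1).choose r
        = m.choose (2 * i - 2) * (i - 1).choose r + m.choose (2 * i - 1) * (i - 1).choose r := by
    intro i hi
    rw [mem_Icc] at hi
    rw [show 2 * i - 1 = (2 * i - 2) + 1 by omega, Nat.choose_succ_succ, Nat.succ_eq_add_one, Nat.add_mul,
      show 2 * i - 2 + 1 = 2 * i - 1 by omega]
  rw [Finset.sum_congr rfl pascal, Finset.sum_add_distrib]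
  rw [Nat.add_comm]
  congr 1
  · apply (Finset.sum_subset (Finset.Icc_subset_Icc_right (by omega : (m+1) / 2 ≤ (m+2)/2)) ?_).symm
    intro x hx hx'
    rw [mem_Icc] at hx hx'
    rw [Nat.choose_eq_zero_of_lt (by omega : m < 2 * x - 1), Nat.zero_mul]
  · rw [auxB, show (m + 1 + 1) / 2 = m / 2 + 1 by omega,
      show r + 1 = r + 1 from rfl, ← Finset.map_add_right_Icc r (m / 2) 1, Finset.sum_map]
    apply Finset.sum_congr rfl
    intro j hj
    simp only [addRightEmbedding_apply]
    rw [show 2 * (j + 1) - 2 = 2 * j by omega, Nat.add_sub_cancel]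

lemma B_split (m r : ℕ) (hr : 1 ≤ r) : auxB m r = S m (r - 1) + S m r := by
  rw [auxB]
  have pascal : ∀ j ∈ Icc r (m / 2),
      m.choose (2 * j) * j.choose r
        = m.choose (2 * j) * (j - 1).choose (r - 1) + m.choose (2 * j) * (j - 1).choose r := by
    intro j hj
    rw [mem_Icc] at hj
    rw [show j = (j - 1) + 1 by omega, show (j-1) + 1 - 1 = j - 1 by omega,
      show r = (r - 1) + 1 by omega, Nat.choose_succ_succ, Nat.mul_add,
      show (r-1) + 1 - 1 = r - 1 by omega]
  rw [Finset.sum_congr rfl pascal, Finset.sum_add_distrib]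
  congr 1
  · rw [S, show r - 1 + 1 = r by omega]
  · rw [S]
    apply (Finset.sum_subset (Finset.Icc_subset_Icc_left (by omega : r ≤ r + 1)) ?_).symm
    intro x hx hx'
    rw [mem_Icc] at hx hx'
    rw [Nat.choose_eq_zero_of_lt (by omega : x - 1 < r), Nat.mul_zero]

lemma E_succ (m : ℕ) : auxE (m + 1) = auxE m + auxO m := by
  rw [auxE, ← Finset.Ico_add_one_right_eq_Icc, Finset.sum_eq_sum_Ico_succ_bot (by omega), Finset.Ico_add_one_right_eq_Icc]
  have pascal : ∀ j ∈ Icc 1 ((m + 1) / 2),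
      (m + 1).choose (2 * j) = m.choose (2 * j - 1) + m.choose (2 * j) := by
    intro j hj
    rw [mem_Icc] at hj
    rw [show 2 * j = (2 * j - 1) + 1 by omega, Nat.choose_succ_succ, Nat.succ_eq_add_one,
      show 2 * j - 1 + 1 = 2 * j by omega]
  rw [Finset.sum_congr rfl pascal, Finset.sum_add_distrib]
  rw [show (m+1).choose 0 = 1 from Nat.choose_zero_right _]
  have e2 : ∑ j ∈ Icc 1 ((m + 1) / 2), m.choose (2 * j)
      = ∑ j ∈ Icc 1 (m / 2), m.choose (2 * j) := by
    apply (Finset.sum_subset (Finset.Icc_subset_Icc_right (by omega : m / 2 ≤ (m+1)/2)) ?_).symm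
    intro x hx hx'
    rw [mem_Icc] at hx hx'
    exact Nat.choose_eq_zero_of_lt (by omega)
  have e3 : auxE m = 1 + ∑ j ∈ Icc 1 (m / 2), m.choose (2 * j) := by
    rw [auxE, ← Finset.Ico_add_one_right_eq_Icc, Finset.sum_eq_sum_Ico_succ_bot (by omega), Finset.Ico_add_one_right_eq_Icc]
    simp
  rw [e2, auxO, e3]
  ring

lemma O_succ (m : ℕ) : auxO (m + 1) = auxE m + auxO m := by
  rw [auxO]
  have pascal : ∀ j ∈ Icc 1 ((m + 1 + 1) / 2),
      (m + 1).choose (2 * j - 1) = m.choose (2 * j - 2) + m.choose (2 * j - 1) := by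
    intro j hj
    rw [mem_Icc] at hj
    rw [show 2 * j - 1 = (2 * j - 2) + 1 by omega, Nat.choose_succ_succ, Nat.succ_eq_add_one,
      show 2 * j - 2 + 1 = 2 * j - 1 by omega]
  rw [Finset.sum_congr rfl pascal, Finset.sum_add_distrib]
  congr 1
  · rw [auxE, show (m + 1 + 1) / 2 = m / 2 + 1 by omega,
      show (1 : ℕ) = 0 + 1 from rfl, ← Finset.map_add_right_Icc 0 (m / 2) 1, Finset.sum_map]
    apply Finset.sum_congr rfl
    intro j hj
    simp only [addRightEmbedding_apply]
    rw [show 2 * (j + 1) - 2 = 2 * j by omega]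
  · rw [auxO]
    apply (Finset.sum_subset (Finset.Icc_subset_Icc_right (by omega : (m+1) / 2 ≤ (m+2)/2)) ?_).symm
    intro x hx hx'
    rw [mem_Icc] at hx hx'
    exact Nat.choose_eq_zero_of_lt (by omega)

lemma EO (m : ℕ) : auxE m + auxO m = 2 ^ m := by
  induction m with
  | zero =>
    rw [auxE, auxO, Icc_eq_empty (by omega : ¬ (1 ≤ (0+1)/2))]
    simp
  | succ m ih =>
    rw [E_succ, O_succ, pow_succ]
    omega

lemma O_val (m : ℕ) (hm : 1 ≤ m) : auxO m = 2 ^ (m - 1) := by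
  obtain ⟨k, rfl⟩ : ∃ k, m = k + 1 := ⟨m - 1, by omega⟩
  rw [O_succ, EO]
  simp

lemma A_zero_eq_O (m : ℕ) : auxA m 0 = auxO m := by
  rw [auxA, auxO]
  apply Finset.sum_congr rfl
  intro j _
  simp

lemma SA_closed : ∀ m : ℕ, (∀ r, S m r = U (m - 1 - r) r) ∧
    (∀ r, 1 ≤ r → auxA m r = (m - 1 - r).choose r * 2 ^ (m - 1 - 2 * r)) := by
  intro m
  induction m with
  | zero =>
    constructor
    · intro r
      rw [S, Icc_eq_empty (by omega : ¬ (r + 1 ≤ 0 / 2)), U_zero _ _ (by omega)]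
      rfl
    · intro r hr
      rw [auxA, Icc_eq_empty (by omega : ¬ (r + 1 ≤ (0 + 1) / 2)), Nat.choose_eq_zero_of_lt (by omega : 0 - 1 - r < r)]
      simp
  | succ m ih =>
    obtain ⟨ihS, ihA⟩ := ih
    constructor
    · intro r
      rw [S_succ, ihS r, show m + 1 - 1 - r = m - r from by omega]
      rcases Nat.eq_zero_or_pos r with rfl | hr
      · -- r = 0
        rcases Nat.eq_zero_or_pos m with rfl | hm
        · simp [auxA, U_zero 0 0 le_rfl]
        · rw [A_zero_eq_O, O_val m hm, show m - 0 = (m - 1 - 0) + 1 by omega, U_succ]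
          simp
      · rw [ihA r hr]
        rcases le_or_gt (r + 1) m with hm | hm
        · rw [show m - r = (m - 1 - r) + 1 by omega, U_succ,
            show m - 1 - r - r = m - 1 - 2 * r by omega]
        · rw [U_zero (m - r) r (by omega), U_zero (m - 1 - r) r (by omega),
            Nat.choose_eq_zero_of_lt (by omega : m - 1 - r < r)]
          simp
    · intro r hr
      rw [A_succ, ihA r hr, B_split m r hr, ihS r, ihS (r - 1),
        show m - 1 - (r - 1) = m - r from by omega,
        show m + 1 - 1 - r = m - r from by omega,
        show m + 1 - 1 - 2 * r = m - 2 * r from by omega]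
      rcases lt_trichotomy m (2 * r) with hm | hm | hm
      · rw [U_zero (m - r) (r - 1) (by omega), U_zero (m - 1 - r) r (by omega),
          Nat.choose_eq_zero_of_lt (by omega : m - 1 - r < r),
          Nat.choose_eq_zero_of_lt (by omega : m - r < r)]
        simp
      · -- m = 2r
        rw [show m - r = (r - 1) + 1 from by omega, U_base,
          U_zero (m - 1 - r) r (by omega),
          Nat.choose_eq_zero_of_lt (by omega : m - 1 - r < r),
          show (r - 1) + 1 = m - r from by omega,
          show m - r = r from by omega, Nat.choose_self,
          show m - 2 * r = 0 from by omega]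
        simp
      · -- m ≥ 2r + 1
        have h1 : U (m - r) (r - 1) = U (m - 1 - r) (r - 1)
            + (m - 1 - r).choose (r - 1) * 2 ^ (m - 2 * r) := by
          rw [show m - r = (m - 1 - r) + 1 from by omega, U_succ,
            show m - 1 - r - (r - 1) = m - 2 * r from by omega]
        have h2 : U (m - 1 - r) r + U (m - 1 - r) (r - 1)
            = (m - 1 - r).choose r * 2 ^ (m - 1 - 2 * r) := by
          rw [U_add_U _ r hr, show m - 1 - r - r = m - 1 - 2 * r from by omega]
        have h3 : (m - r).choose r = (m - 1 - r).choose (r - 1) + (m - 1 - r).choose r := by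
          rw [show m - r = (m - 1 - r) + 1 from by omega, show r = (r - 1) + 1 from by omega,
            Nat.choose_succ_succ, Nat.succ_eq_add_one,
            show r - 1 + 1 = r from by omega]
        have h4 : (m - 1 - r).choose r * 2 ^ (m - 2 * r)
            = 2 * ((m - 1 - r).choose r * 2 ^ (m - 1 - 2 * r)) := by
          rw [show m - 2 * r = (m - 1 - 2 * r) + 1 from by omega, pow_succ]
          ring
        rw [h1, h3, Nat.add_mul]
        omega


theorem main_identities (m r : ℕ) (h : 2 * r + 2 ≤ m) :
    S m r = T (m - 1 - r) r ∧ T (m - 1 - r) r = U (m - 1 - r) r ∧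
      (S m r : ℤ) = W (m - 1 - r) r ∧
      (1 ≤ r → U (m - 1 - r) r = V (m - 1 - r) r) := by
  have hn : r + 1 ≤ m - 1 - r := by omega
  have hS := (SA_closed m).1 r
  refine ⟨?_, TU _ _, ?_, fun hr => UV _ _ hr hn⟩
  · rw [hS, TU]
  · rw [hS]
    exact UW _ _ hn
end

section
/- For all integers m and r with 0 ≤ r and 2r + 2 ≤ m, the following identity holds in the integers: Σ_{i=r+1}^{⌊m/2⌋} C(m,2i)·C(i−1,r) = 2^{m−1−2r}·Σ_{k=0}^{⌊r/2⌋} C(m−3−r−2k, r−2k) + (−1)^{r+1}. -/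
open Finset
private def Af (m r : ℕ) : ℕ := ∑ i ∈ range (m+1), m.choose (2*i) * i.choose r
private def Bf (m r : ℕ) : ℕ := ∑ i ∈ range (m+1), m.choose (2*i+1) * i.choose r
private def Ef (m r : ℕ) : ℕ := ∑ i ∈ range (m+1), m.choose (2*i+2) * i.choose r
private def Df (m r : ℕ) : ℕ := ∑ i ∈ range (m+1), m.choose (2*i+1) * (i+1).choose r
private def Uf (N r : ℕ) : ℕ := ∑ k ∈ range (r/2+1), (N - 2*k).choose (r - 2*k)

private lemma B_rec (m r : ℕ) : Bf (m+1) r = Af m r + Bf m r := by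
  unfold Af Bf
  rw [Finset.sum_range_succ (n := m+1)]
  have h1 : (m+1).choose (2*(m+1)+1) * (m+1).choose r = 0 := by
    rw [Nat.choose_eq_zero_of_lt (by omega)]; ring
  rw [h1, add_zero, ← Finset.sum_add_distrib]
  apply Finset.sum_congr rfl
  intro i _
  rw [Nat.choose_succ_succ (m) (2*i)]
  ring

private lemma A_rec (m r : ℕ) : Af (m+1) r = Af m r + Df m r := by
  unfold Af Df
  rw [Finset.sum_range_succ' (fun i => (m+1).choose (2*i) * i.choose r) (m+1),
      Finset.sum_range_succ' (fun i => m.choose (2*i) * i.choose r) m]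
  have step : ∀ i ∈ range (m+1), (m+1).choose (2*(i+1)) * (i+1).choose r
      = m.choose (2*i+1) * (i+1).choose r + m.choose (2*(i+1)) * (i+1).choose r := by
    intro i _
    have h : 2*(i+1) = (2*i+1)+1 := by ring
    rw [h, Nat.choose_succ_succ]
    ring
  rw [Finset.sum_congr rfl step, Finset.sum_add_distrib]
  have h2 : ∑ i ∈ range (m+1), m.choose (2*(i+1)) * (i+1).choose r
      = ∑ i ∈ range m, m.choose (2*(i+1)) * (i+1).choose r := by
    rw [Finset.sum_range_succ, Nat.choose_eq_zero_of_lt (by omega)]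
    simp
  rw [h2]
  simp
  omega

private lemma D_zero (m : ℕ) : Df m 0 = Bf m 0 := by
  unfold Df Bf; simp

private lemma D_succ (m r : ℕ) : Df m (r+1) = Bf m r + Bf m (r+1) := by
  unfold Df Bf
  rw [← Finset.sum_add_distrib]
  apply Finset.sum_congr rfl
  intro i _
  rw [Nat.choose_succ_succ i r]
  ring

private lemma AB0 : ∀ m, Af (m+1) 0 = 2^m ∧ Bf (m+1) 0 = 2^m := by
  intro m
  induction m with
  | zero => constructor <;> decide
  | succ n ih =>
    obtain ⟨ha, hb⟩ := ih
    constructor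
    · rw [A_rec, D_zero, ha, hb]; ring
    · rw [B_rec, ha, hb]; ring

private lemma B_base (r : ℕ) : Bf (2*r+1) r = 1 := by
  unfold Bf
  rw [Finset.sum_eq_single_of_mem r (by simp; omega)]
  · rw [show 2*r+1 = 2*r+1 from rfl, Nat.choose_self, Nat.choose_self]
  · intro b _ hbr
    rcases Nat.lt_or_ge b r with h | h
    · rw [Nat.choose_eq_zero_of_lt h]; ring
    · rw [Nat.choose_eq_zero_of_lt (show 2*r+1 < 2*b+1 by omega)]; ring

private lemma A_base (r : ℕ) : Af (2*r+3) (r+1) = 2*r+3 := by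
  unfold Af
  rw [Finset.sum_eq_single_of_mem (r+1) (by simp; omega)]
  · rw [show 2*(r+1) = 2*r+2 by ring, Nat.choose_self,
        show 2*r+3 = (2*r+2)+1 from rfl, Nat.choose_succ_self_right]
    ring
  · intro b _ hbr
    rcases Nat.lt_or_ge b (r+1) with h | h
    · rw [Nat.choose_eq_zero_of_lt h]; ring
    · rw [Nat.choose_eq_zero_of_lt (show 2*r+3 < 2*b by omega)]; ring

private lemma AB_closed : ∀ m r : ℕ,
    (2*r+1 ≤ m → Bf m r = 2^(m-1-2*r) * (m-1-r).choose r) ∧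
    (2*r+3 ≤ m → Af m (r+1) = 2^(m-3-2*r) * ((m-r-1).choose (r+1) + (m-r-2).choose r)) := by
  intro m
  induction m with
  | zero => intro r; constructor <;> (intro h; omega)
  | succ m ih =>
    intro r
    constructor
    · intro hr
      rcases Nat.lt_or_ge (2*r+1) (m+1) with h | h
      · -- 2r+1 ≤ m
        have h' : 2*r+1 ≤ m := by omega
        rw [B_rec]
        rcases r with _ | r'
        · -- r = 0
          obtain ⟨m', rfl⟩ : ∃ m', m = m'+1 := ⟨m-1, by omega⟩
          rw [(AB0 m').1, ((ih 0).1 (by omega)), show m'+1-1-0 = m' by omega]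
          simp [Nat.choose_zero_right, pow_succ]
          ring
        · have ha := (ih r').2 (by omega)
          have hb := (ih (r'+1)).1 h'
          rw [ha, hb]
          rw [show m-1-2*(r'+1) = m-3-2*r' by omega,
              show m-1-(r'+1) = m-r'-2 by omega,
              show m-r'-1 = (m-r'-2)+1 by omega, Nat.choose_succ_succ,
              show m+1-1-2*(r'+1) = (m-3-2*r')+1 by omega,
              show m+1-1-(r'+1) = (m-r'-2)+1 by omega, pow_succ,
              Nat.choose_succ_succ (m-r'-2) r']
          ring
      · -- m+1 = 2r+1
        obtain rfl : m = 2*r := by omega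
        rw [show 2*r+1-1-2*r = 0 by omega, show 2*r+1-1-r = r by omega,
            Nat.choose_self, B_base]
        norm_num
    · intro hr
      rcases Nat.lt_or_ge (2*r+3) (m+1) with h | h
      · have h' : 2*r+3 ≤ m := by omega
        have ha := (ih r).2 h'
        have hb1 := (ih r).1 (by omega)
        have hb2 := (ih (r+1)).1 (by omega)
        rw [A_rec, D_succ, ha, hb1, hb2]
        rw [show m-1-2*r = (m-3-2*r)+2 by omega,
            show m-1-r = m-r-1 by omega,
            show m-1-2*(r+1) = m-3-2*r by omega,
            show m-1-(r+1) = m-r-2 by omega,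
            show m-r-1 = (m-r-2)+1 by omega, Nat.choose_succ_succ,
            show m+1-3-2*r = (m-3-2*r)+1 by omega,
            show m+1-r-1 = ((m-r-2)+1)+1 by omega,
            show m+1-r-2 = (m-r-2)+1 by omega, Nat.choose_succ_succ ((m-r-2)+1) r]
        rw [Nat.choose_succ_succ (m-r-2) r]
        ring
      · obtain rfl : m = 2*r+2 := by omega
        rw [show 2*r+2+1 = 2*r+3 from rfl, A_base,
            show 2*r+3-3-2*r = 0 by omega,
            show 2*r+3-r-1 = r+2 by omega, show 2*r+3-r-2 = r+1 by omega]
        rw [show r+2 = (r+1)+1 from rfl, Nat.choose_succ_self_right, Nat.choose_succ_self_right]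
        ring

private lemma U_zero_s1 (N : ℕ) : Uf N 0 = 1 := by unfold Uf; simp

private lemma U_one (N : ℕ) : Uf N 1 = N.choose 1 := by unfold Uf; simp

private lemma U_peel (N r : ℕ) : Uf N (r+2) = N.choose (r+2) + Uf (N-2) r := by
  unfold Uf
  rw [show (r+2)/2+1 = (r/2+1)+1 by omega,
      Finset.sum_range_succ' (fun k => (N-2*k).choose (r+2-2*k)) (r/2+1)]
  simp only [Nat.mul_zero, Nat.sub_zero]
  rw [add_comm]
  congr 1
  apply Finset.sum_congr rfl
  intro k _
  rw [show N-2*(k+1) = N-2-2*k by omega, show r+2-2*(k+1) = r-2*k by omega]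

private lemma U_pascal (N r : ℕ) (h : r ≤ N) : Uf (N+1) (r+1) = Uf N (r+1) + Uf N r := by
  unfold Uf
  rcases Nat.even_or_odd r with ⟨s, hs⟩ | ⟨s, hs⟩
  · obtain rfl : r = 2*s := by omega
    rw [show (2*s+1)/2+1 = s+1 by omega, show 2*s/2+1 = s+1 by omega,
        ← Finset.sum_add_distrib]
    apply Finset.sum_congr rfl
    intro k hk
    simp only [Finset.mem_range] at hk
    rw [show N+1-2*k = (N-2*k)+1 by omega, show 2*s+1-2*k = (2*s-2*k)+1 by omega,
        Nat.choose_succ_succ]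
    simp only [Nat.succ_eq_add_one]
    omega
  · obtain rfl : r = 2*s+1 := by omega
    rw [show (2*s+1+1)/2+1 = (s+1)+1 by omega, show (2*s+1)/2+1 = s+1 by omega,
        Finset.sum_range_succ (fun k => (N+1-2*k).choose (2*s+1+1-2*k)) (s+1),
        Finset.sum_range_succ (fun k => (N-2*k).choose (2*s+1+1-2*k)) (s+1)]
    have e1 : (N+1-2*(s+1)).choose (2*s+1+1-2*(s+1)) = 1 := by
      rw [show 2*s+1+1-2*(s+1) = 0 by omega, Nat.choose_zero_right]
    have e2 : (N-2*(s+1)).choose (2*s+1+1-2*(s+1)) = 1 := by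
      rw [show 2*s+1+1-2*(s+1) = 0 by omega, Nat.choose_zero_right]
    rw [e1, e2]
    have main : ∑ k ∈ range (s+1), (N+1-2*k).choose (2*s+1+1-2*k)
        = ∑ k ∈ range (s+1), (N-2*k).choose (2*s+1+1-2*k)
          + ∑ k ∈ range (s+1), (N-2*k).choose (2*s+1-2*k) := by
      rw [← Finset.sum_add_distrib]
      apply Finset.sum_congr rfl
      intro k hk
      simp only [Finset.mem_range] at hk
      rw [show N+1-2*k = (N-2*k)+1 by omega, show 2*s+1+1-2*k = (2*s+1-2*k)+1 by omega,
          Nat.choose_succ_succ]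
      simp only [Nat.succ_eq_add_one]
      omega
    omega

private lemma U_hockey : ∀ r N : ℕ, r ≤ N+1 → (N+2).choose (r+1) = Uf (N+1) (r+1) + Uf N r := by
  intro r
  induction r using Nat.strong_induction_on with
  | _ r ih =>
    match r with
    | 0 => intro N _; simp [U_zero_s1, U_one, Nat.choose_one_right]
    | 1 =>
      intro N _
      rw [show (1:ℕ)+1 = 0+2 from rfl, U_peel, U_one, U_zero_s1,
          Nat.choose_two_right, Nat.choose_two_right, Nat.choose_one_right]
      have h1 : N+2-1 = N+1 := by omega
      have h2 : N+1-1 = N := by omega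
      rw [h1, h2]
      have key : (N+2)*(N+1) = (N+1)*N + 2*(N+1) := by ring
      omega
    | (r+2) =>
      intro N hN
      rcases Nat.lt_or_ge N 2 with hsm | hbig
      · interval_cases N
        · omega
        · obtain rfl : r = 0 := by omega
          decide
      · obtain ⟨n, rfl⟩ : ∃ n, N = n+2 := ⟨N-2, by omega⟩
        rw [show r+2+1 = (r+1)+2 from rfl, U_peel, U_peel,
            show n+2+1-2 = n+1 by omega, show n+2-2 = n by omega]
        have hrec := ih r (by omega) n (by omega)
        have p1 : (n+2+2).choose (r+1+2) = (n+2+1).choose (r+1+1) + (n+2+1).choose (r+1+2) :=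
          Nat.choose_succ_succ _ _
        have p2 : (n+2+1).choose (r+2) = (n+2).choose (r+1) + (n+2).choose (r+2) :=
          Nat.choose_succ_succ _ _
        have e1 : (n+2+1).choose (r+1+1) = (n+2+1).choose (r+2) := rfl
        have e2 : (n+2+1).choose (r+1+2) = (n+2+1).choose (r+2+1) := rfl
        omega
private lemma E_rec (m r : ℕ) : Af m (r+1) = Ef m r + Ef m (r+1) := by
  unfold Af Ef
  rw [Finset.sum_range_succ' (fun i => m.choose (2*i) * i.choose (r+1)) m]
  rw [Nat.choose_zero_succ, Finset.sum_range_succ (fun i => m.choose (2*i+2) * i.choose r) m,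
      Finset.sum_range_succ (fun i => m.choose (2*i+2) * i.choose (r+1)) m,
      Nat.choose_eq_zero_of_lt (show m < 2*m+2 by omega)]
  simp only [Nat.mul_zero, Nat.zero_mul, Nat.add_zero, Nat.mul_one]
  rw [← Finset.sum_add_distrib]
  apply Finset.sum_congr rfl
  intro i _
  rw [show 2*(i+1) = (2*i+2) by ring, Nat.choose_succ_succ i r]
  ring

private lemma E_zero_aux (m : ℕ) : Af m 0 = 1 + Ef m 0 := by
  unfold Af Ef
  rw [Finset.sum_range_succ' (fun i => m.choose (2*i) * i.choose 0) m,
      Finset.sum_range_succ (fun i => m.choose (2*i+2) * i.choose 0) m,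
      Nat.choose_eq_zero_of_lt (show m < 2*m+2 by omega)]
  simp only [Nat.choose_zero_right, Nat.mul_one, Nat.zero_mul, Nat.add_zero, Nat.mul_zero]
  have : ∀ i ∈ range m, m.choose (2*(i+1)) = m.choose (2*i+2) := by
    intro i _; rw [show 2*(i+1) = 2*i+2 by ring]
  rw [Finset.sum_congr rfl this]
  omega
private lemma C2 (N r : ℕ) (h : r ≤ N) : (N+2).choose r + Uf N r = 2 * Uf (N+1) r := by
  rcases r with _ | r'
  · simp [U_zero_s1]
  · have hh := U_hockey r' N (by omega)
    have hp := U_pascal N r' (by omega)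
    omega

private lemma U_key (N r : ℕ) (h : r ≤ N) :
    (N+3).choose (r+1) + (N+2).choose r = Uf N (r+1) + 4 * Uf (N+1) r := by
  have hh : (N+1+2).choose (r+1) = Uf (N+1+1) (r+1) + Uf (N+1) r := U_hockey r (N+1) (by omega)
  have e1 : (N+1+2).choose (r+1) = (N+3).choose (r+1) := by norm_num
  have e2 : Uf (N+1+1) (r+1) = Uf (N+2) (r+1) := by norm_num
  have p1 : Uf (N+1+1) (r+1) = Uf (N+1) (r+1) + Uf (N+1) r := U_pascal (N+1) r (by omega)
  have p2 : Uf (N+1) (r+1) = Uf N (r+1) + Uf N r := U_pascal N r h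
  have c2 := C2 N r h
  omega

private lemma E_closed : ∀ r m : ℕ, 2*r+2 ≤ m →
    (Ef m r : ℤ) = 2^(m-1-2*r) * (Uf (m-3-r) r : ℤ) + (-1)^(r+1) := by
  intro r
  induction r with
  | zero =>
    intro m hm
    obtain ⟨m', rfl⟩ : ∃ m', m = m'+1 := ⟨m-1, by omega⟩
    have h1 := E_zero_aux (m'+1)
    have h2 := (AB0 m').1
    rw [U_zero_s1, show m'+1-1-2*0 = m' by omega]
    have : Ef (m'+1) 0 = 2^m' - 1 := by omega
    rw [this]
    have hpos : 1 ≤ 2^m' := Nat.one_le_two_pow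
    push_cast [hpos]
    ring
  | succ r ih =>
    intro m hm
    have hrec : Af m (r+1) = Ef m r + Ef m (r+1) := E_rec m r
    have hA := (AB_closed m r).2 (by omega)
    have hE := ih m (by omega)
    have hkey := U_key (m-4-r) r (by omega)
    rw [show m-4-r+3 = m-r-1 by omega, show m-4-r+2 = m-r-2 by omega,
        show m-4-r+1 = m-3-r by omega] at hkey
    have goalrw1 : m-1-2*(r+1) = m-3-2*r := by omega
    have goalrw2 : m-3-(r+1) = m-4-r := by omega
    rw [goalrw1, goalrw2]
    have hEZ : (Ef m (r+1) : ℤ) = (Af m (r+1) : ℤ) - (Ef m r : ℤ) := by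
      have := hrec; push_cast [this]; ring
    have hAZ : (Af m (r+1) : ℤ)
        = 2^(m-3-2*r) * (((m-r-1).choose (r+1) : ℤ) + ((m-r-2).choose r : ℤ)) := by
      rw [hA]; push_cast; ring
    rw [hEZ, hE, hAZ]
    have hkeyZ : ((m-r-1).choose (r+1) : ℤ) + ((m-r-2).choose r : ℤ)
        = (Uf (m-4-r) (r+1) : ℤ) + 4 * (Uf (m-3-r) r : ℤ) := by exact_mod_cast hkey
    rw [show m-1-2*r = (m-3-2*r)+2 by omega]
    linear_combination (2:ℤ)^(m-3-2*r) * hkeyZ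

theorem main_identity (m r : ℕ) (h : 2 * r + 2 ≤ m) :
    (∑ i ∈ Icc (r + 1) (m / 2), (m.choose (2 * i) * (i - 1).choose r : ℤ)) =
      2 ^ (m - 1 - 2 * r) *
        ∑ k ∈ range (r / 2 + 1), ((m - 3 - r - 2 * k).choose (r - 2 * k) : ℤ)
      + (-1) ^ (r + 1) := by
  have hU : ∑ k ∈ range (r / 2 + 1), ((m - 3 - r - 2 * k).choose (r - 2 * k) : ℤ)
      = ((Uf (m-3-r) r : ℕ) : ℤ) := by
    unfold Uf
    push_cast
    apply Finset.sum_congr rfl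
    intro k _
    norm_num [Nat.sub_sub]
  rw [hU]
  have hS : (∑ i ∈ Icc (r + 1) (m / 2), (m.choose (2 * i) * (i - 1).choose r : ℤ))
      = ((Ef m r : ℕ) : ℤ) := by
    have hnat : (∑ i ∈ Icc (r + 1) (m / 2), m.choose (2 * i) * (i - 1).choose r) = Ef m r := by
      have hsub : Icc (r+1) (m/2) ⊆ Icc 1 (m+1) := by
        intro i hi
        simp only [Finset.mem_Icc] at *
        omega
      have hzero : ∀ i ∈ Icc 1 (m+1), i ∉ Icc (r+1) (m/2) →
          m.choose (2*i) * (i-1).choose r = 0 := by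
        intro i hi hni
        simp only [Finset.mem_Icc] at *
        rcases Nat.lt_or_ge (m/2) i with hbig | hsm
        · rw [Nat.choose_eq_zero_of_lt (show m < 2*i by omega)]; ring
        · rw [Nat.choose_eq_zero_of_lt (show i-1 < r by omega)]; ring
      rw [Finset.sum_subset hsub hzero]
      rw [show Icc 1 (m+1) = Ico 1 (m+2) by rfl, Finset.sum_Ico_eq_sum_range]
      unfold Ef
      rw [show m+2-1 = m+1 by omega]
      apply Finset.sum_congr rfl
      intro i _
      rw [show 1+i-1 = i by omega, show 2*(1+i) = 2*i+2 by ring]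
    rw [← hnat]
    push_cast
    rfl
  rw [hS]
  exact E_closed r m h
end

section
/- For all integers n and r with 0 ≤ r ≤ n−1, one has T(n,r) = U(n,r). -/
open Finset

lemma key (n r : ℕ) (h : r ≤ n) :
    ∑ k ∈ Icc r n, n.choose k * k.choose r = n.choose r * 2 ^ (n - r) := by
  have : Icc r n = (range (n - r + 1)).map ⟨fun i => r + i, add_right_injective r⟩ := by
    ext x
    simp only [mem_Icc, mem_map, mem_range, Function.Embedding.coeFn_mk]
    constructor
    · intro hx; exact ⟨x - r, by omega, by omega⟩
    · rintro ⟨i, hi, rfl⟩; omega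
  rw [this, Finset.sum_map]
  simp only [Function.Embedding.coeFn_mk]
  have step : ∀ i ∈ range (n - r + 1),
      n.choose (r + i) * (r + i).choose r = n.choose r * (n - r).choose i := by
    intro i hi
    simp only [mem_range] at hi
    rw [Nat.choose_mul (by omega), Nat.add_sub_cancel_left]
  rw [Finset.sum_congr rfl step, ← Finset.mul_sum, Nat.sum_range_choose]

theorem T_eq_U (n r : ℕ) (h : r + 1 ≤ n) : T n r = U n r := by
  induction n with
  | zero => omega
  | succ m ih =>
    rcases Nat.lt_or_ge r m with hm | hm
    · -- r + 1 ≤ m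
      have hm' : r + 1 ≤ m := hm
      have hT : T (m + 1) r = T m r + ∑ k ∈ Icc r m, m.choose k * k.choose r := by
        unfold T
        rw [Finset.sum_Icc_succ_top (by omega), Nat.choose_self, one_mul]
        simp only [Nat.add_sub_cancel]
        have hsplit : ∀ j ∈ Icc (r + 1) m, (m + 1).choose j * (j - 1).choose r
            = m.choose j * (j - 1).choose r + m.choose (j - 1) * (j - 1).choose r := by
          intro j hj
          simp only [mem_Icc] at hj
          obtain ⟨j, rfl⟩ : ∃ j', j = j' + 1 := ⟨j - 1, by omega⟩
          rw [Nat.choose_succ_succ', Nat.add_mul]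
          simp only [Nat.add_sub_cancel]
          exact Nat.add_comm _ _
        rw [Finset.sum_congr rfl hsplit, Finset.sum_add_distrib]
        have reidx : ∑ j ∈ Icc (r + 1) m, m.choose (j - 1) * (j - 1).choose r
            = ∑ k ∈ Icc r (m - 1), m.choose k * k.choose r := by
          have : Icc (r + 1) m
              = (Icc r (m - 1)).map ⟨fun k => k + 1, add_left_injective 1⟩ := by
            ext x
            simp only [mem_Icc, mem_map, Function.Embedding.coeFn_mk]
            constructor
            · intro hx; exact ⟨x - 1, by omega, by omega⟩
            · rintro ⟨k, hk, rfl⟩; omega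
          rw [this, Finset.sum_map]
          simp
        rw [reidx]
        have last : ∑ k ∈ Icc r m, m.choose k * k.choose r
            = ∑ k ∈ Icc r (m - 1), m.choose k * k.choose r + m.choose m * m.choose r := by
          have hins : Icc r m = insert m (Icc r (m - 1)) := by
            ext x; simp only [mem_insert, mem_Icc]; omega
          rw [hins, Finset.sum_insert (by simp only [mem_Icc]; omega)]
          omega
        rw [Nat.choose_self] at last
        omega
      have hU : U (m + 1) r = U m r + (m.choose r * 2 ^ (m - r)) := by
        unfold U
        rw [Finset.sum_Icc_succ_top (by omega)]
        congr 1
      rw [hT, hU, ih hm', key m r (by omega)]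
    · -- m = r, base case n = r + 1
      have : m = r := by omega
      subst this
      unfold T U
      rw [show Icc (m+1) (m+1) = {m+1} from Finset.Icc_self _]
      simp
end

section
/- For all integers m and r with 0 ≤ r and 2r + 2 ≤ m, the power of two 2^{m−1−2r} divides the integer S(m,r) + (−1)^r. -/
open Finset

def A (m r : ℕ) : ℤ := ∑ i ∈ range (m+1), (m.choose (2*i) * i.choose r : ℤ)
def B (m r : ℕ) : ℤ := ∑ i ∈ range (m+1), (m.choose (2*i+1) * i.choose r : ℤ)

lemma Brec (m r : ℕ) : B (m+1) r = B m r + A m r := by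
  unfold A B
  rw [sum_range_succ]
  have h0 : ((m+1).choose (2*(m+1)+1) : ℤ) = 0 := by
    rw [Nat.choose_eq_zero_of_lt (by omega)]; norm_num
  rw [h0, ← sum_add_distrib]
  simp only [zero_mul, add_zero]
  refine sum_congr rfl fun i _ => ?_
  have : (m+1).choose (2*i+1) = m.choose (2*i) + m.choose (2*i+1) := by
    rw [Nat.choose_succ_succ]
  rw [this]; push_cast; ring

lemma shift_sum (f : ℕ → ℤ) (m : ℕ) (h0 : f (m+1) = 0) :
    ∑ i ∈ range (m+1), f (i+1) = ∑ i ∈ range (m+1), f i - f 0 := by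
  have h1 := Finset.sum_range_succ' f (m+1)
  have h2 := Finset.sum_range_succ f (m+1)
  rw [h2] at h1
  linarith

lemma Arec0 (m : ℕ) : A (m+1) 0 = A m 0 + B m 0 := by
  unfold A B
  rw [sum_range_succ']
  have htop : ∀ i ∈ range (m+1), ((m+1).choose (2*(i+1)) * (i+1).choose 0 : ℤ)
      = m.choose (2*i+1) * i.choose 0 + m.choose (2*(i+1)) * (i+1).choose 0 := by
    intro i _
    have h : (m+1).choose (2*(i+1)) = m.choose (2*i+1) + m.choose (2*i+2) := by
      have h2 : 2*(i+1) = (2*i+1)+1 := by ring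
      rw [h2, Nat.choose_succ_succ]
    rw [h]
    have h3 : 2*i+2 = 2*(i+1) := by ring
    rw [h3]; simp [Nat.choose_zero_right]
  rw [sum_congr rfl htop, sum_add_distrib]
  rw [shift_sum (fun i => (m.choose (2*i) * i.choose 0 : ℤ)) m
    (by simp [Nat.choose_eq_zero_of_lt (show m < 2*(m+1) by omega)])]
  simp [Nat.choose_zero_right]
  ring

lemma ArecS (m r : ℕ) : A (m+1) (r+1) = A m (r+1) + B m (r+1) + B m r := by
  unfold A B
  rw [sum_range_succ']
  have h00 : ((Nat.choose 0 (r+1) : ℤ)) = 0 := by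
    rw [Nat.choose_eq_zero_of_lt (by omega)]; norm_num
  have htop : ∀ i ∈ range (m+1), ((m+1).choose (2*(i+1)) * (i+1).choose (r+1) : ℤ)
      = m.choose (2*i+1) * i.choose r + m.choose (2*i+1) * i.choose (r+1)
        + m.choose (2*(i+1)) * (i+1).choose (r+1) := by
    intro i _
    have h : (m+1).choose (2*(i+1)) = m.choose (2*i+1) + m.choose (2*i+2) := by
      have h2 : 2*(i+1) = (2*i+1)+1 := by ring
      rw [h2, Nat.choose_succ_succ]
    have h4 : (i+1).choose (r+1) = i.choose r + i.choose (r+1) := Nat.choose_succ_succ i r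
    rw [h]
    have h3 : 2*i+2 = 2*(i+1) := by ring
    rw [h3, h4]; push_cast; ring
  rw [sum_congr rfl htop, sum_add_distrib, sum_add_distrib]
  rw [shift_sum (fun i => (m.choose (2*i) * i.choose (r+1) : ℤ)) m
    (by simp [Nat.choose_eq_zero_of_lt (show m < 2*(m+1) by omega)])]
  simp only [Nat.choose_zero_right, mul_comm, h00]
  push_cast
  ring

lemma AB_formula : ∀ m : ℕ, 1 ≤ m → ∀ r : ℕ,
    2 * 4^r * A m r = 2^m * (2 * ((m-r).choose r) - ((m-1-r).choose r) : ℤ) ∧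
    2 * 4^r * B m r = 2^m * (((m-1-r).choose r) : ℤ) := by
  intro m hm
  induction m, hm using Nat.le_induction with
  | base =>
    intro r
    have hA1 : A 1 r = (Nat.choose 0 r : ℤ) := by
      unfold A; rw [sum_range_succ, sum_range_succ, sum_range_zero]
      simp [Nat.choose_eq_zero_of_lt (show 1 < 2*1 by omega)]
    have hB1 : B 1 r = (Nat.choose 0 r : ℤ) := by
      unfold B; rw [sum_range_succ, sum_range_succ, sum_range_zero]
      simp [Nat.choose_eq_zero_of_lt (show 1 < 2*1+1 by omega)]
    rcases r with _ | r
    · simp [hA1, hB1]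
    · have h0 : (Nat.choose 0 (r+1) : ℤ) = 0 := by
        rw [Nat.choose_eq_zero_of_lt (by omega)]; norm_num
      have h1 : (Nat.choose (1-(r+1)) (r+1) : ℤ) = 0 := by
        rw [Nat.choose_eq_zero_of_lt (by omega)]; norm_num
      have h2 : (Nat.choose (1-1-(r+1)) (r+1) : ℤ) = 0 := by
        rw [Nat.choose_eq_zero_of_lt (by omega)]; norm_num
      refine ⟨?_, ?_⟩
      · rw [hA1, h0, h1, h2]; ring
      · rw [hB1, h0, h2]; ring
  | succ m hm ih =>
    intro r
    rcases r with _ | r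
    · -- r = 0
      obtain ⟨ha, hb⟩ := ih 0
      simp only [Nat.choose_zero_right, Nat.cast_one, pow_zero, mul_one] at ha hb ⊢
      norm_num at ha hb
      constructor
      · rw [Arec0]
        have hp : (2:ℤ)^(m+1) = 2*2^m := by ring
        norm_num [hp]; linarith
      · rw [Brec]
        have hp : (2:ℤ)^(m+1) = 2*2^m := by ring
        norm_num [hp]; linarith
    · -- r = r+1
      obtain ⟨ha, hb⟩ := ih (r+1)
      obtain ⟨ha', hb'⟩ := ih r
      have hmB : m+1-1-(r+1) = m-(r+1) := by omega
      constructor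
      · rw [ArecS]
        rw [hmB]
        -- goal: 2*4^(r+1)*(A m (r+1) + B m (r+1) + B m r) = 2^(m+1)*(2*C(m+1-(r+1),r+1) - C(m-(r+1),r+1))
        have key : (2 * ((m+1-(r+1)).choose (r+1)) : ℤ)
            = 2 * ((m-(r+1)).choose (r+1)) + 2 * ((m-1-r).choose r) + 0 := by
          rcases le_or_gt (r+1) m with hle | hlt
          · have h1 : m+1-(r+1) = (m-(r+1)) + 1 := by omega
            have h2 : m-1-r = m-(r+1) := by omega
            rw [h1, h2, Nat.choose_succ_succ]
            push_cast; ring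
          · have e1 : m+1-(r+1) = m-r := by omega
            have e2 : (Nat.choose (m+1-(r+1)) (r+1) : ℤ) = 0 := by
              rw [Nat.choose_eq_zero_of_lt (by omega)]; norm_num
            have e3 : (Nat.choose (m-(r+1)) (r+1) : ℤ) = 0 := by
              rw [Nat.choose_eq_zero_of_lt (by omega)]; norm_num
            have e4 : (Nat.choose (m-1-r) r : ℤ) = 0 := by
              rw [Nat.choose_eq_zero_of_lt (by omega)]; norm_num
            rw [e2, e3, e4]; ring
        calc 2 * 4^(r+1) * (A m (r+1) + B m (r+1) + B m r)
            = 2*4^(r+1)*A m (r+1) + 2*4^(r+1)*B m (r+1) + 4*(2*4^r*B m r) := by ring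
          _ = 2^m * (2 * ((m-(r+1)).choose (r+1)) - ((m-1-(r+1)).choose (r+1)))
              + 2^m * ((m-1-(r+1)).choose (r+1)) + 4*(2^m*((m-1-r).choose r)) := by
              rw [ha, hb, hb']
          _ = 2^(m+1) * ((m-(r+1)).choose (r+1) + 2*((m-1-r).choose r)) := by ring
          _ = 2^(m+1) * (2 * ((m+1-(r+1)).choose (r+1)) - ((m-(r+1)).choose (r+1))) := by
              rw [key]; ring
      · rw [Brec, hmB]
        calc 2 * 4^(r+1) * (B m (r+1) + A m (r+1))
            = 2*4^(r+1)*A m (r+1) + 2*4^(r+1)*B m (r+1) := by ring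
          _ = 2^m * (2 * ((m-(r+1)).choose (r+1)) - ((m-1-(r+1)).choose (r+1)))
              + 2^m * ((m-1-(r+1)).choose (r+1)) := by rw [ha, hb]
          _ = 2^(m+1) * ((m-(r+1)).choose (r+1)) := by ring

lemma A_Icc (m r : ℕ) : A m r = ∑ i ∈ Icc r (m/2), (m.choose (2*i) * i.choose r : ℤ) := by
  unfold A
  refine (sum_subset (fun x hx => ?_) (fun x hx hnx => ?_)).symm
  · rw [mem_Icc] at hx; rw [mem_range]; omega
  · rw [mem_Icc] at hnx; rw [mem_range] at hx
    rcases le_or_gt x (m/2) with h1 | h1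
    · have : x < r := by omega
      rw [Nat.choose_eq_zero_of_lt this]; norm_num
    · rw [Nat.choose_eq_zero_of_lt (show m < 2*x by omega)]; norm_num

lemma peel (f : ℕ → ℤ) (r n : ℕ) (h : r ≤ n) :
    ∑ i ∈ Icc r n, f i = f r + ∑ i ∈ Icc (r+1) n, f i := by
  rw [Finset.Icc_eq_cons_Ioc h, Finset.sum_cons, ← Finset.Icc_add_one_left_eq_Ioc]

lemma S0_eq (m : ℕ) (h : 1 ≤ m / 2) : (S m 0 : ℤ) + 1 = A m 0 := by
  rw [A_Icc, peel _ 0 (m/2) (by omega)]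
  unfold S
  push_cast
  simp [Nat.choose_zero_right]
  ring

lemma SS_eq (m r : ℕ) (h : r + 1 ≤ m / 2) :
    (S m (r+1) : ℤ) + S m r = A m (r+1) := by
  rw [A_Icc, peel _ (r+1) (m/2) h]
  unfold S
  push_cast
  rw [peel (fun i => ((m.choose (2*i) : ℤ) * ((i-1).choose r : ℕ))) (r+1) (m/2) h]
  have hc : ∀ i ∈ Icc (r+1+1) (m/2),
      ((m.choose (2*i) : ℤ) * (i.choose (r+1) : ℕ))
        = (m.choose (2*i) : ℤ) * ((i-1).choose (r+1) : ℕ)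
          + (m.choose (2*i) : ℤ) * ((i-1).choose r : ℕ) := by
    intro i hi
    rw [mem_Icc] at hi
    have h1 : i = (i-1)+1 := by omega
    have h2 : i.choose (r+1) = (i-1).choose r + (i-1).choose (r+1) := by
      conv_lhs => rw [h1]
      exact Nat.choose_succ_succ (i-1) r
    rw [h2]; push_cast; ring
  rw [sum_congr rfl hc, sum_add_distrib]
  simp [Nat.choose_self, Nat.add_sub_cancel]
  ring

theorem two_pow_dvd (m r : ℕ) (h : 2 * r + 2 ≤ m) :
    (2 : ℤ) ^ (m - 1 - 2 * r) ∣ (S m r : ℤ) + (-1) ^ r := by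
  induction r with
  | zero =>
    have hm1 : 1 ≤ m := by omega
    have hhalf : 1 ≤ m/2 := by omega
    obtain ⟨ha, _⟩ := AB_formula m hm1 0
    simp only [Nat.choose_zero_right, Nat.cast_one, pow_zero, mul_one, Nat.sub_zero] at ha
    norm_num at ha
    have he : m - 1 - 2*0 = m - 1 := by omega
    have hA : A m 0 = 2^(m-1) := by
      have h2 : (2:ℤ) ≠ 0 := by norm_num
      apply mul_left_cancel₀ h2
      rw [ha]
      rw [← pow_succ']
      congr 1
      omega
    rw [he, pow_zero, S0_eq m hhalf, hA]
  | succ r ih =>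
    have hdvd2 := ih (by omega)
    have hhalf : r + 1 ≤ m/2 := by omega
    obtain ⟨ha, _⟩ := AB_formula m (by omega) (r+1)
    set c : ℤ := 2 * ((m-(r+1)).choose (r+1)) - ((m-1-(r+1)).choose (r+1)) with hc
    have hpow : (2:ℤ)^m = 2*4^(r+1) * 2^(m-1-2*(r+1)) := by
      calc (2:ℤ)^m = 2^(1+2*(r+1)+(m-1-2*(r+1))) := by congr 1; omega
        _ = 2^1 * 2^(2*(r+1)) * 2^(m-1-2*(r+1)) := by rw [pow_add, pow_add]
        _ = 2*4^(r+1) * 2^(m-1-2*(r+1)) := by rw [pow_mul]; norm_num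
    have hA : A m (r+1) = 2^(m-1-2*(r+1)) * c := by
      have h4 : (2*4^(r+1) : ℤ) ≠ 0 := by positivity
      apply mul_left_cancel₀ h4
      rw [ha, hpow]; ring
    have key : (S m (r+1) : ℤ) + (-1)^(r+1) = A m (r+1) - ((S m r : ℤ) + (-1)^r) := by
      have hss := SS_eq m r hhalf
      rw [pow_succ]
      linarith
    rw [key, hA]
    apply dvd_sub
    · exact Dvd.intro c rfl
    · exact dvd_trans (pow_dvd_pow 2 (by omega)) hdvd2
end

section
/- For every fixed integer r ≥ 0, the following identity of formal power series over the integers holds: (1 − X)·(1 − 2X)^{r+1} · Σ_{m≥0} S(m,r)·X^m = X^{2r+2}; equivalently, for fixed r the generating function of the sequence (S(m,r))_{m≥0} is x^{2r+2}/((1−x)(1−2x)^{r+1}). -/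
open Finset PowerSeries

lemma drop_last (f : ℕ → ℕ) (m : ℕ) (h : f m = 0) :
    ∑ j ∈ range (m + 1), f j = ∑ j ∈ range m, f j := by
  rw [Finset.sum_range_succ, h, add_zero]

lemma S_eq (n r : ℕ) :
    S n r = ∑ j ∈ range n, n.choose (2 * j + 2) * j.choose r := by
  have h1 : S n r = ∑ i ∈ Icc 1 n, n.choose (2 * i) * (i - 1).choose r := by
    unfold S
    apply Finset.sum_subset
    · intro x hx
      simp only [mem_Icc] at hx ⊢
      omega
    · intro x hx hx'
      simp only [mem_Icc, not_and, not_le] at hx hx'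
      rcases Nat.lt_or_ge x (r + 1) with h | h
      · have : x - 1 < r := by omega
        rw [Nat.choose_eq_zero_of_lt this, mul_zero]
      · have : n < 2 * x := by
          have := hx' h
          omega
        rw [Nat.choose_eq_zero_of_lt this, zero_mul]
  rw [h1, ← Finset.Ico_add_one_right_eq_Icc, Finset.sum_Ico_eq_sum_range]
  have hn : n + 1 - 1 = n := by omega
  rw [hn]
  apply Finset.sum_congr rfl
  intro j _
  congr 1
  · congr 1
    omega
  · congr 1
    omega

lemma S_rec (n r : ℕ) : S (n + 2) (r + 1) = 2 * S (n + 1) (r + 1) + S n r := by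
  rw [S_eq, S_eq, S_eq]
  have h1 : ∑ j ∈ range (n + 2), (n + 1).choose (2 * j + 2) * j.choose (r + 1)
      = ∑ j ∈ range (n + 1), (n + 1).choose (2 * j + 2) * j.choose (r + 1) := by
    apply drop_last
    have : n + 1 < 2 * (n + 1) + 2 := by omega
    simp [Nat.choose_eq_zero_of_lt this]
  have h2 : ∑ j ∈ range (n + 2), n.choose (2 * j + 2) * j.choose r
      = ∑ j ∈ range n, n.choose (2 * j + 2) * j.choose r := by
    rw [drop_last _ (n + 1) (by
      have : n < 2 * (n + 1) + 2 := by omega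
      simp [Nat.choose_eq_zero_of_lt this])]
    apply drop_last
    have : n < 2 * n + 2 := by omega
    simp [Nat.choose_eq_zero_of_lt this]
  have pas : ∀ m k : ℕ, (m + 2).choose (k + 2)
      = m.choose k + 2 * m.choose (k + 1) + m.choose (k + 2) := by
    intro m k
    rw [Nat.choose_succ_succ' (m + 1) (k + 1), Nat.choose_succ_succ' m k,
      Nat.choose_succ_succ' m (k + 1)]
    ring
  have hL : ∑ j ∈ range (n + 2), (n + 2).choose (2 * j + 2) * j.choose (r + 1)
      = (∑ j ∈ range (n + 2), n.choose (2 * j) * j.choose (r + 1))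
        + 2 * (∑ j ∈ range (n + 2), n.choose (2 * j + 1) * j.choose (r + 1))
        + (∑ j ∈ range (n + 2), n.choose (2 * j + 2) * j.choose (r + 1)) := by
    rw [Finset.mul_sum, ← Finset.sum_add_distrib, ← Finset.sum_add_distrib]
    apply Finset.sum_congr rfl
    intro j _
    rw [pas n (2 * j)]
    ring
  have hM : ∑ j ∈ range (n + 2), (n + 1).choose (2 * j + 2) * j.choose (r + 1)
      = (∑ j ∈ range (n + 2), n.choose (2 * j + 1) * j.choose (r + 1))
        + (∑ j ∈ range (n + 2), n.choose (2 * j + 2) * j.choose (r + 1)) := by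
    rw [← Finset.sum_add_distrib]
    apply Finset.sum_congr rfl
    intro j _
    rw [Nat.choose_succ_succ' n (2 * j + 1)]
    ring
  have hC1 : ∑ j ∈ range (n + 2), n.choose (2 * j + 2) * j.choose (r + 1)
      = ∑ j ∈ range (n + 1), n.choose (2 * j + 2) * j.choose (r + 1) := by
    apply drop_last
    have : n < 2 * (n + 1) + 2 := by omega
    simp [Nat.choose_eq_zero_of_lt this]
  have hD1 : ∑ j ∈ range (n + 2), n.choose (2 * j + 2) * j.choose r
      = ∑ j ∈ range (n + 1), n.choose (2 * j + 2) * j.choose r := by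
    apply drop_last
    have : n < 2 * (n + 1) + 2 := by omega
    simp [Nat.choose_eq_zero_of_lt this]
  have key : ∑ j ∈ range (n + 2), n.choose (2 * j) * j.choose (r + 1)
      = (∑ j ∈ range (n + 2), n.choose (2 * j + 2) * j.choose r)
        + (∑ j ∈ range (n + 2), n.choose (2 * j + 2) * j.choose (r + 1)) := by
    rw [Finset.sum_range_succ' (fun j => n.choose (2 * j) * j.choose (r + 1)) (n + 1)]
    have z0 : Nat.choose 0 (r + 1) = 0 := Nat.choose_eq_zero_of_lt (by omega)
    have step : ∀ j : ℕ, n.choose (2 * (j + 1)) * (j + 1).choose (r + 1)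
        = n.choose (2 * j + 2) * j.choose r + n.choose (2 * j + 2) * j.choose (r + 1) := by
      intro j
      rw [Nat.choose_succ_succ' j r]
      have h2j : 2 * (j + 1) = 2 * j + 2 := by ring
      rw [h2j]
      ring
    rw [Finset.sum_congr rfl (fun j _ => step j), Finset.sum_add_distrib, z0, mul_zero,
      add_zero, hC1, hD1]
  omega

lemma EO_s8 (n : ℕ) :
    (∑ j ∈ range (n + 2), (n + 1).choose (2 * j)) = 2 ^ n ∧
    (∑ j ∈ range (n + 2), (n + 1).choose (2 * j + 1)) = 2 ^ n := by
  induction n with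
  | zero => constructor <;> decide
  | succ n ih =>
    obtain ⟨hE, hO⟩ := ih
    have hE' : ∑ j ∈ range (n + 3), (n + 1).choose (2 * j) = 2 ^ n := by
      rw [drop_last (fun j => (n + 1).choose (2 * j)) (n + 2) (by
        have : n + 1 < 2 * (n + 2) := by omega
        simp [Nat.choose_eq_zero_of_lt this])]
      exact hE
    have hO' : ∑ j ∈ range (n + 3), (n + 1).choose (2 * j + 1) = 2 ^ n := by
      rw [drop_last (fun j => (n + 1).choose (2 * j + 1)) (n + 2) (by
        have : n + 1 < 2 * (n + 2) + 1 := by omega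
        simp [Nat.choose_eq_zero_of_lt this])]
      exact hO
    have hE2 : ∑ j ∈ range (n + 2), (n + 1).choose (2 * (j + 1)) = 2 ^ n - 1 := by
      have peel := Finset.sum_range_succ' (fun j => (n + 1).choose (2 * j)) (n + 2)
      simp only [Nat.mul_zero, Nat.choose_zero_right, show n + 2 + 1 = n + 3 from rfl] at peel
      have hcongr : ∑ j ∈ range (n + 3), (n + 1).choose (2 * j) = 2 ^ n := hE'
      omega
    constructor
    · have expand : ∀ j : ℕ, (n + 2).choose (2 * (j + 1))
          = (n + 1).choose (2 * j + 1) + (n + 1).choose (2 * (j + 1)) := by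
        intro j
        have h2j : 2 * (j + 1) = (2 * j + 1) + 1 := by ring
        rw [h2j, Nat.choose_succ_succ' (n + 1) (2 * j + 1)]
      rw [Finset.sum_range_succ' (fun j => (n + 2).choose (2 * j)) (n + 2)]
      rw [Finset.sum_congr rfl (fun j _ => expand j), Finset.sum_add_distrib]
      simp only [Nat.mul_zero, Nat.choose_zero_right]
      rw [hO, hE2]
      have hpos : 1 ≤ 2 ^ n := Nat.one_le_two_pow
      have : (2 : ℕ) ^ (n + 1) = 2 ^ n * 2 := pow_succ 2 n
      omega
    · have expand : ∀ j : ℕ, (n + 2).choose (2 * j + 1)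
          = (n + 1).choose (2 * j) + (n + 1).choose (2 * j + 1) := by
        intro j
        rw [Nat.choose_succ_succ' (n + 1) (2 * j)]
      rw [Finset.sum_congr rfl (fun j _ => expand j), Finset.sum_add_distrib, hE', hO']
      have : (2 : ℕ) ^ (n + 1) = 2 ^ n * 2 := pow_succ 2 n
      omega

lemma S_zero (n : ℕ) : S (n + 1) 0 + 1 = 2 ^ n := by
  rw [S_eq]
  simp only [Nat.choose_zero_right, mul_one]
  have hE := (EO_s8 n).1
  have peel := Finset.sum_range_succ' (fun j => (n + 1).choose (2 * j)) (n + 1)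
  simp only [Nat.mul_zero, Nat.choose_zero_right, show n + 1 + 1 = n + 2 from rfl] at peel
  have hcongr : ∑ j ∈ range (n + 1), (n + 1).choose (2 * (j + 1))
      = ∑ j ∈ range (n + 1), (n + 1).choose (2 * j + 2) := by
    apply Finset.sum_congr rfl
    intro j _
    have h2j : 2 * (j + 1) = 2 * j + 2 := by ring
    rw [h2j]
  omega

lemma S_small (r : ℕ) : S 0 r = 0 ∧ S 1 r = 0 := by
  constructor <;> · simp [S]

lemma ps_rec (r : ℕ) :
    (1 - 2 * X) * PowerSeries.mk (fun m => (S m (r + 1) : ℤ)) =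
      X ^ 2 * PowerSeries.mk (fun m => (S m r : ℤ)) := by
  have hring : (1 - 2 * X) * PowerSeries.mk (fun m => (S m (r + 1) : ℤ))
      = PowerSeries.mk (fun m => (S m (r + 1) : ℤ))
        - X * PowerSeries.mk (fun m => (S m (r + 1) : ℤ))
        - X * PowerSeries.mk (fun m => (S m (r + 1) : ℤ)) := by ring
  rw [hring]
  ext n
  rcases n with _ | _ | m
  · simp [S, coeff_zero_eq_constantCoeff, map_mul]
  · simp only [map_sub, coeff_succ_X_mul, coeff_mk]
    rw [coeff_X_pow_mul']
    simp [(S_small (r + 1)).1, (S_small (r + 1)).2]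
  · have hidx : m + 1 + 1 = m + 2 := rfl
    simp only [map_sub, coeff_succ_X_mul, coeff_mk, hidx]
    rw [coeff_X_pow_mul ((PowerSeries.mk (fun m => (S m r : ℤ)))) 2 m, coeff_mk]
    have := S_rec m r
    omega

theorem genFun (r : ℕ) :
    (1 - X) * (1 - 2 * X) ^ (r + 1) *
        PowerSeries.mk (fun m => (S m r : ℤ)) = X ^ (2 * r + 2) := by
  induction r with
  | zero =>
    rw [pow_one]
    have hring : (1 - X) * (1 - 2 * X) * PowerSeries.mk (fun m => (S m 0 : ℤ))
        = PowerSeries.mk (fun m => (S m 0 : ℤ))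
          - X * PowerSeries.mk (fun m => (S m 0 : ℤ))
          - X * PowerSeries.mk (fun m => (S m 0 : ℤ))
          - X * PowerSeries.mk (fun m => (S m 0 : ℤ))
          + X ^ 2 * PowerSeries.mk (fun m => (S m 0 : ℤ))
          + X ^ 2 * PowerSeries.mk (fun m => (S m 0 : ℤ)) := by ring
    rw [hring]
    ext n
    rcases n with _ | _ | m
    · simp [S, coeff_zero_eq_constantCoeff, map_mul, coeff_X_pow_mul']
    · simp only [map_add, map_sub, coeff_succ_X_mul, coeff_mk]
      rw [coeff_X_pow_mul', coeff_X_pow]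
      simp [(S_small 0).1, (S_small 0).2]
    · have hidx : m + 1 + 1 = m + 2 := rfl
      simp only [map_add, map_sub, coeff_succ_X_mul, coeff_mk, hidx]
      rw [coeff_X_pow_mul ((PowerSeries.mk (fun m => (S m 0 : ℤ)))) 2 m, coeff_mk,
        coeff_X_pow]
      rcases m with _ | k
      · norm_num
        decide
      · have e1 : S (k + 1 + 2) 0 + 1 = 2 ^ (k + 2) := S_zero (k + 2)
        have e2 : S (k + 1 + 1) 0 + 1 = 2 ^ (k + 1) := S_zero (k + 1)
        have e3 : S (k + 1) 0 + 1 = 2 ^ k := S_zero k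
        have p1 : (2 : ℕ) ^ (k + 1) = 2 ^ k * 2 := pow_succ 2 k
        have p2 : (2 : ℕ) ^ (k + 2) = 2 ^ (k + 1) * 2 := pow_succ 2 (k + 1)
        have hne : (k + 1 + 2 : ℕ) ≠ 2 := by omega
        rw [if_neg hne]
        omega
  | succ r ih =>
    calc (1 - X) * (1 - 2 * X) ^ (r + 1 + 1) * PowerSeries.mk (fun m => (S m (r + 1) : ℤ))
        = (1 - X) * (1 - 2 * X) ^ (r + 1) *
            ((1 - 2 * X) * PowerSeries.mk (fun m => (S m (r + 1) : ℤ))) := by ring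
      _ = (1 - X) * (1 - 2 * X) ^ (r + 1) *
            (X ^ 2 * PowerSeries.mk (fun m => (S m r : ℤ))) := by rw [ps_rec]
      _ = (1 - X) * (1 - 2 * X) ^ (r + 1) * PowerSeries.mk (fun m => (S m r : ℤ)) * X ^ 2 := by
            ring
      _ = X ^ (2 * r + 2) * X ^ 2 := by rw [ih]
      _ = X ^ (2 * (r + 1) + 2) := by rw [← pow_add, show 2 * r + 2 + 2 = 2 * (r + 1) + 2 from by ring]
end

section
/- Let f(n) = T(2n, n). Then for every integer n ≥ 0, the recurrence (24n² + 44n + 16)·f(n) + (21n² + 37n + 14)·f(n+1) − (3n² + 7n + 2)·f(n+2) = 0 holds in the integers. -/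
open Finset

/-- `f n = T (2n) n`. -/
def f (n : ℕ) : ℕ := T (2 * n) n

lemma L1 (n r : ℕ) :
    2 ^ r * ∑ k ∈ Icc r n, n.choose k * k.choose r = 2 ^ n * n.choose r := by
  rcases le_or_gt r n with h | h
  · have key : ∀ k ∈ Icc r n, n.choose k * k.choose r
        = n.choose r * (n - r).choose (k - r) := by
      intro k hk
      simp only [mem_Icc] at hk
      rw [Nat.choose_mul hk.1]
    rw [Finset.sum_congr rfl key, ← Finset.mul_sum]
    have hre : Icc r n = Ico r (n + 1) := (Finset.Ico_add_one_right_eq_Icc r n).symm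
    rw [hre, Finset.sum_Ico_eq_sum_range]
    simp only [Nat.add_sub_cancel_left, Nat.add_sub_cancel]
    have hnr : n + 1 - r = (n - r) + 1 := by omega
    rw [hnr, Nat.sum_range_choose]
    have : 2 ^ r * (n.choose r * 2 ^ (n - r)) = 2 ^ (r + (n - r)) * n.choose r := by
      rw [pow_add]; ring
    rw [this]; congr 2; omega
  · rw [Finset.Icc_eq_empty (by omega), Finset.sum_empty,
      Nat.choose_eq_zero_of_lt h]
    simp

lemma L2 (n r : ℕ) :
    T (n + 1) r = T n r + ∑ k ∈ Icc r n, n.choose k * k.choose r := by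
  rcases le_or_gt r n with h | h
  · unfold T
    rw [show Icc (r + 1) (n + 1) = Ico (r + 1) (n + 2) from (Finset.Ico_add_one_right_eq_Icc _ _).symm,
      Finset.sum_Ico_eq_sum_range,
      show Icc (r + 1) n = Ico (r + 1) (n + 1) from (Finset.Ico_add_one_right_eq_Icc _ _).symm,
      Finset.sum_Ico_eq_sum_range,
      show Icc r n = Ico r (n + 1) from (Finset.Ico_add_one_right_eq_Icc _ _).symm,
      Finset.sum_Ico_eq_sum_range]
    have h1 : n + 2 - (r + 1) = (n - r) + 1 := by omega
    have h2 : n + 1 - (r + 1) = n - r := by omega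
    have h3 : n + 1 - r = (n - r) + 1 := by omega
    rw [h1, h2, h3]
    have key : ∀ i, (n + 1).choose (r + 1 + i) * (r + 1 + i - 1).choose r
        = n.choose (r + 1 + i) * (r + 1 + i - 1).choose r
          + n.choose (r + i) * (r + i).choose r := by
      intro i
      have e2 : r + 1 + i - 1 = r + i := by omega
      have e1 : r + 1 + i = (r + i) + 1 := by omega
      rw [e2, e1, Nat.choose_succ_succ n (r + i)]
      ring
    rw [Finset.sum_congr rfl (fun i _ => key i), Finset.sum_add_distrib]
    rw [Finset.sum_range_succ (fun i => n.choose (r + 1 + i) * (r + 1 + i - 1).choose r)]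
    have hz : n.choose (r + 1 + (n - r)) = 0 := Nat.choose_eq_zero_of_lt (by omega)
    rw [hz, Nat.zero_mul, Nat.add_zero]
  · unfold T
    rw [Finset.Icc_eq_empty (show ¬ r + 1 ≤ n + 1 by omega),
      Finset.Icc_eq_empty (show ¬ r + 1 ≤ n by omega),
      Finset.Icc_eq_empty (show ¬ r ≤ n by omega)]
    simp

lemma L3 (n r : ℕ) :
    2 ^ (r + 1) * (T n (r + 1) + T n r) = 2 ^ n * n.choose (r + 1) := by
  induction n with
  | zero =>
    unfold T
    rw [Finset.Icc_eq_empty (by omega), Finset.Icc_eq_empty (by omega)]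
    simp
  | succ n ih =>
    rw [L2 n (r + 1), L2 n r]
    have e1 := L1 n (r + 1)
    have e2 := L1 n r
    have pas : (n + 1).choose (r + 1) = n.choose r + n.choose (r + 1) :=
      Nat.choose_succ_succ n r
    rw [pas]
    calc 2 ^ (r + 1) * (T n (r + 1) + ∑ k ∈ Icc (r + 1) n, n.choose k * k.choose (r + 1)
          + (T n r + ∑ k ∈ Icc r n, n.choose k * k.choose r))
        = 2 ^ (r + 1) * (T n (r + 1) + T n r)
          + 2 ^ (r + 1) * ∑ k ∈ Icc (r + 1) n, n.choose k * k.choose (r + 1)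
          + 2 * (2 ^ r * ∑ k ∈ Icc r n, n.choose k * k.choose r) := by ring
      _ = 2 ^ n * n.choose (r + 1) + 2 ^ n * n.choose (r + 1) + 2 * (2 ^ n * n.choose r) := by
          rw [ih, e1, e2]
      _ = 2 ^ (n + 1) * (n.choose r + n.choose (r + 1)) := by ring

lemma LA (n : ℕ) :
    f (n + 1) + f n = 2 ^ n * (2 * (2 * n).choose (n + 1) + (2 * n).choose n) := by
  have hmul : 2 ^ (n + 1) * (f (n + 1) + f n)
      = 2 ^ (n + 1) * (2 ^ n * (2 * (2 * n).choose (n + 1) + (2 * n).choose n)) := by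
    have hf1 : f (n + 1) = T (2 * n + 2) (n + 1) := by
      show T (2 * (n + 1)) (n + 1) = _
      congr 1
    have step1 : T (2 * n + 2) (n + 1)
        = T (2 * n + 1) (n + 1)
          + ∑ k ∈ Icc (n + 1) (2 * n + 1), (2 * n + 1).choose k * k.choose (n + 1) :=
      L2 (2 * n + 1) (n + 1)
    have step2 : T (2 * n + 1) (n + 1)
        = T (2 * n) (n + 1)
          + ∑ k ∈ Icc (n + 1) (2 * n), (2 * n).choose k * k.choose (n + 1) :=
      L2 (2 * n) (n + 1)
    have l3 := L3 (2 * n) n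
    have l1a := L1 (2 * n) (n + 1)
    have l1b := L1 (2 * n + 1) (n + 1)
    have pas : (2 * n + 1).choose (n + 1) = (2 * n).choose n + (2 * n).choose (n + 1) :=
      Nat.choose_succ_succ (2 * n) n
    have hfn : f n = T (2 * n) n := rfl
    calc 2 ^ (n + 1) * (f (n + 1) + f n)
        = 2 ^ (n + 1) * (T (2 * n) (n + 1) + T (2 * n) n)
          + 2 ^ (n + 1) * ∑ k ∈ Icc (n + 1) (2 * n), (2 * n).choose k * k.choose (n + 1)
          + 2 ^ (n + 1) * ∑ k ∈ Icc (n + 1) (2 * n + 1), (2 * n + 1).choose k * k.choose (n + 1) := by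
          rw [hf1, step1, step2, hfn]; ring
      _ = 2 ^ (2 * n) * (2 * n).choose (n + 1) + 2 ^ (2 * n) * (2 * n).choose (n + 1)
          + 2 ^ (2 * n + 1) * (2 * n + 1).choose (n + 1) := by rw [l3, l1a, l1b]
      _ = 2 ^ (2 * n + 1) * (2 * (2 * n).choose (n + 1) + (2 * n).choose n) := by
          rw [pas]; ring
      _ = 2 ^ (n + 1) * (2 ^ n * (2 * (2 * n).choose (n + 1) + (2 * n).choose n)) := by
          have hp : (2:ℕ) ^ (2 * n + 1) = 2 ^ (n + 1) * 2 ^ n := by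
            rw [← pow_add]; congr 1; omega
          rw [hp]; ring
  exact Nat.eq_of_mul_eq_mul_left (by positivity) hmul

lemma LG (n : ℕ) :
    ((n : ℤ) + 2) * (3 * n + 1)
        * (2 * (2 * (n + 1)).choose (n + 2) + (2 * (n + 1)).choose (n + 1))
      = 2 * (2 * n + 1) * (3 * n + 4)
        * (2 * (2 * n).choose (n + 1) + (2 * n).choose n) := by
  have e1 : (2 * n).choose (n + 1) * (n + 1) = (2 * n).choose n * n := by
    have := Nat.choose_succ_right_eq (2 * n) n
    rwa [show 2 * n - n = n by omega] at this
  have e2 : (2 * (n + 1)).choose (n + 2) * (n + 2) = (2 * (n + 1)).choose (n + 1) * (n + 1) := by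
    have := Nat.choose_succ_right_eq (2 * (n + 1)) (n + 1)
    rwa [show 2 * (n + 1) - (n + 1) = n + 1 by omega] at this
  have e3 : (n + 1) * (2 * (n + 1)).choose (n + 1) = 2 * (2 * n + 1) * (2 * n).choose n :=
    Nat.succ_mul_centralBinom_succ n
  have e1' : ((2 * n).choose (n + 1) : ℤ) * (n + 1) = (2 * n).choose n * n := by
    exact_mod_cast congrArg (Nat.cast : ℕ → ℤ) e1
  have e2' : ((2 * (n + 1)).choose (n + 2) : ℤ) * (n + 2)
      = (2 * (n + 1)).choose (n + 1) * (n + 1) := by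
    exact_mod_cast congrArg (Nat.cast : ℕ → ℤ) e2
  have e3' : ((n : ℤ) + 1) * (2 * (n + 1)).choose (n + 1)
      = 2 * (2 * n + 1) * (2 * n).choose n := by
    exact_mod_cast congrArg (Nat.cast : ℕ → ℤ) e3
  have hne : ((n : ℤ) + 1) ≠ 0 := by positivity
  apply mul_left_cancel₀ hne
  linear_combination 2 * (3 * (n:ℤ) + 1) * ((n:ℤ) + 1) * e2'
    + (3 * (n:ℤ) + 1) * (3 * (n:ℤ) + 4) * e3'
    - 4 * (2 * (n:ℤ) + 1) * (3 * (n:ℤ) + 4) * e1'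

theorem recurrence (n : ℕ) :
    (24 * (n : ℤ) ^ 2 + 44 * n + 16) * f n + (21 * (n : ℤ) ^ 2 + 37 * n + 14) * f (n + 1)
      - (3 * (n : ℤ) ^ 2 + 7 * n + 2) * f (n + 2) = 0 := by
  have h1 := LA n
  have h2 := LA (n + 1)
  have h3 := LG n
  have h1' : (f (n + 1) : ℤ) + f n
      = 2 ^ n * (2 * (2 * n).choose (n + 1) + (2 * n).choose n) := by
    exact_mod_cast congrArg (Nat.cast : ℕ → ℤ) h1
  have h2' : (f (n + 2) : ℤ) + f (n + 1)
      = 2 ^ (n + 1) * (2 * (2 * (n + 1)).choose (n + 2) + (2 * (n + 1)).choose (n + 1)) := by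
    exact_mod_cast congrArg (Nat.cast : ℕ → ℤ) h2
  linear_combination (24 * (n : ℤ) ^ 2 + 44 * n + 16) * h1'
    - (3 * (n : ℤ) ^ 2 + 7 * n + 2) * h2'
    - 2 * (2 : ℤ) ^ n * h3
end

section
/- For all integers m and r with 0 ≤ 2r < m, one has (m − r) · Σ_{i=r}^{⌊m/2⌋} C(m,2i)·C(i,r) = m · 2^{m−1−2r} · C(m−r, r) (the Moriarty formula, cleared of denominators). -/
open Finset

def SS (m r : ℕ) : ℕ := ∑ i ∈ range (m+1), m.choose (2*i) * i.choose r
def UU (m r : ℕ) : ℕ := ∑ i ∈ range (m+1), m.choose (2*i+1) * i.choose r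

lemma SS_pad (m r : ℕ) : ∑ i ∈ range (m+2), m.choose (2*i) * i.choose r = SS m r := by
  unfold SS
  rw [Finset.sum_range_succ]
  rw [Nat.choose_eq_zero_of_lt (by omega : m < 2*(m+1))]
  simp

lemma UU_pad (m r : ℕ) : ∑ i ∈ range (m+2), m.choose (2*i+1) * i.choose r = UU m r := by
  unfold UU
  rw [Finset.sum_range_succ]
  rw [Nat.choose_eq_zero_of_lt (by omega : m < 2*(m+1)+1)]
  simp

lemma US (m r : ℕ) : UU (m+1) r = UU m r + SS m r := by
  rw [← UU_pad m r, ← SS_pad m r]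
  unfold UU
  rw [← Finset.sum_add_distrib]
  apply Finset.sum_congr rfl
  intro i _
  rw [Nat.choose_succ_succ m (2*i)]
  ring

lemma SUr (m r : ℕ) : SS (m+1) (r+1) = SS m (r+1) + UU m r + UU m (r+1) := by
  have e1 : SS (m+1) (r+1)
      = ∑ j ∈ range (m+1), (m.choose (2*j+1) + m.choose (2*j+2)) * (j.choose r + j.choose (r+1)) := by
    unfold SS
    rw [Finset.sum_range_succ' (fun i => (m+1).choose (2*i) * i.choose (r+1)) (m+1)]
    have h0 : Nat.choose 0 (r+1) = 0 := Nat.choose_eq_zero_of_lt (by omega)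
    simp only [h0, mul_zero, add_zero]
    apply Finset.sum_congr rfl
    intro j _
    have h1 : 2*(j+1) = (2*j+1)+1 := by ring
    rw [h1, Nat.choose_succ_succ m (2*j+1), Nat.choose_succ_succ j r]
  have e2 : SS m (r+1) = ∑ j ∈ range (m+1), m.choose (2*j+2) * (j.choose r + j.choose (r+1)) := by
    unfold SS
    rw [Finset.sum_range_succ' (fun i => m.choose (2*i) * i.choose (r+1)) m]
    have h0 : Nat.choose 0 (r+1) = 0 := Nat.choose_eq_zero_of_lt (by omega)
    simp only [h0, mul_zero, add_zero]
    rw [Finset.sum_range_succ (fun j => m.choose (2*j+2) * (j.choose r + j.choose (r+1))) m]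
    rw [Nat.choose_eq_zero_of_lt (by omega : m < 2*m+2)]
    simp only [zero_mul, add_zero]
    apply Finset.sum_congr rfl
    intro j _
    have h1 : 2*(j+1) = 2*j+2 := by ring
    rw [h1, Nat.choose_succ_succ j r]
  rw [e1, e2]
  unfold UU
  rw [← Finset.sum_add_distrib, ← Finset.sum_add_distrib]
  apply Finset.sum_congr rfl
  intro j _
  ring

lemma SU0 (m : ℕ) : SS (m+1) 0 = SS m 0 + UU m 0 := by
  have e1 : SS (m+1) 0
      = (∑ j ∈ range (m+1), (m.choose (2*j+1) + m.choose (2*j+2))) + 1 := by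
    unfold SS
    rw [Finset.sum_range_succ' (fun i => (m+1).choose (2*i) * i.choose 0) (m+1)]
    simp only [Nat.choose_zero_right, mul_one, Nat.choose_zero_right, mul_zero, Nat.mul_zero]
    norm_num
    apply Finset.sum_congr rfl
    intro j _
    have h1 : 2*(j+1) = (2*j+1)+1 := by ring
    rw [h1, Nat.choose_succ_succ m (2*j+1)]
  have e2 : SS m 0 = (∑ j ∈ range (m+1), m.choose (2*j+2)) + 1 := by
    unfold SS
    rw [Finset.sum_range_succ' (fun i => m.choose (2*i) * i.choose 0) m]
    simp only [Nat.choose_zero_right, mul_one]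
    rw [Finset.sum_range_succ (fun j => m.choose (2*j+2)) m]
    rw [Nat.choose_eq_zero_of_lt (by omega : m < 2*m+2)]
    simp only [add_zero, Nat.mul_zero, Nat.choose_zero_right]
    apply congrArg (· + 1)
    apply Finset.sum_congr rfl
    intro j _
    have h2 : 2*(j+1) = 2*j+2 := by ring
    rw [h2]
  have e3 : UU m 0 = ∑ j ∈ range (m+1), m.choose (2*j+1) := by
    unfold UU
    simp
  rw [e1, e2, e3, Finset.sum_add_distrib]
  omega

lemma Szero (m r : ℕ) (h : m < 2*r) : SS m r = 0 := by
  unfold SS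
  apply Finset.sum_eq_zero
  intro i _
  rcases lt_or_ge i r with hir | hir
  · rw [Nat.choose_eq_zero_of_lt hir, mul_zero]
  · rw [Nat.choose_eq_zero_of_lt (by omega : m < 2*i), zero_mul]

lemma Sdiag (r : ℕ) : SS (2*r) r = 1 := by
  unfold SS
  rw [Finset.sum_eq_single r]
  · rw [Nat.choose_self, Nat.choose_self]
  · intro i _ hne
    rcases lt_or_ge i r with h1 | h1
    · rw [Nat.choose_eq_zero_of_lt h1, mul_zero]
    · rw [Nat.choose_eq_zero_of_lt (by omega : 2*r < 2*i), zero_mul]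
  · intro hc
    exact absurd (Finset.mem_range.mpr (by omega)) hc

lemma key_s10 (m : ℕ) :
    (1 ≤ m → ∀ r, UU m r = 2^(m-1-2*r) * (m-1-r).choose r)
  ∧ (1 ≤ m → SS m 0 = 2^(m-1))
  ∧ (∀ r, 2*r+2 < m → SS m (r+1) = 2^(m-2*r-3) * ((m-r-1).choose (r+1) + (m-r-2).choose r)) := by
  induction m with
  | zero =>
      exact ⟨fun h => absurd h (by omega), fun h => absurd h (by omega),
        fun r hr => absurd hr (by omega)⟩
  | succ m ih =>
    obtain ⟨ihU, ihS0, ihSr⟩ := ih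
    have partU : ∀ r, UU (m+1) r = 2^(m+1-1-2*r) * (m+1-1-r).choose r := by
      intro r
      rcases Nat.eq_zero_or_pos m with hm0 | hm1
      · subst hm0
        have hL : UU 1 r = Nat.choose 0 r := by
          unfold UU
          rw [Finset.sum_range_succ, Finset.sum_range_succ, Finset.sum_range_zero]
          norm_num [Nat.choose]
        rw [hL]
        norm_num
      · rw [US]
        rcases Nat.lt_trichotomy (2*r) m with hlt | heq | hgt
        · by_cases hr0 : r = 0
          · subst hr0
            rw [ihU hm1 0, ihS0 hm1]
            simp only [Nat.mul_zero, Nat.sub_zero, Nat.choose_zero_right, mul_one]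
            have e : m+1-1 = (m-1)+1 := by omega
            rw [e, pow_succ]
            ring
          · obtain ⟨r', rfl⟩ : ∃ r', r = r' + 1 := ⟨r - 1, by omega⟩
            have hU := ihU hm1 (r'+1)
            have hS := ihSr r' (by omega)
            rw [hU, hS]
            have e1 : m - 1 - 2*(r'+1) = m - 2*r' - 3 := by omega
            have e2 : m - 1 - (r'+1) = m - r' - 2 := by omega
            have e3 : m + 1 - 1 - 2*(r'+1) = (m - 2*r' - 3) + 1 := by omega
            have e4 : m + 1 - 1 - (r'+1) = m - r' - 1 := by omega
            rw [e1, e2, e3, e4, pow_succ]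
            have pas : (m - r' - 2).choose (r'+1) + (m - r' - 2).choose r'
                = (m - r' - 1).choose (r'+1) := by
              have h5 : m - r' - 1 = (m - r' - 2) + 1 := by omega
              rw [h5, Nat.choose_succ_succ, Nat.succ_eq_add_one]
              omega
            rw [← pas]
            ring
        · have hU := ihU hm1 r
          have hS : SS m r = 1 := by rw [← heq]; exact Sdiag r
          rw [hU, hS]
          have c0 : (m-1-r).choose r = 0 := Nat.choose_eq_zero_of_lt (by omega)
          have e3 : m + 1 - 1 - 2*r = 0 := by omega
          have e4 : m + 1 - 1 - r = r := by omega
          rw [c0, e3, e4, Nat.choose_self]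
          ring
        · have hU := ihU hm1 r
          have hS := Szero m r hgt
          rw [hU, hS]
          have c0 : (m-1-r).choose r = 0 := Nat.choose_eq_zero_of_lt (by omega)
          have c1 : (m+1-1-r).choose r = 0 := Nat.choose_eq_zero_of_lt (by omega)
          rw [c0, c1]
          ring
    refine ⟨fun _ => partU, ?_, ?_⟩
    · intro _
      rcases Nat.eq_zero_or_pos m with hm0 | hm1
      · subst hm0
        have hL : SS 1 0 = 1 := by
          unfold SS
          rw [Finset.sum_range_succ, Finset.sum_range_succ, Finset.sum_range_zero]
          norm_num [Nat.choose]
        rw [hL]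
        norm_num
      · rw [SU0, ihS0 hm1, ihU hm1 0]
        simp only [Nat.mul_zero, Nat.sub_zero, Nat.choose_zero_right, mul_one]
        have e : m+1-1 = (m-1)+1 := by omega
        rw [e, pow_succ]
        ring
    · intro r hr
      rw [SUr]
      rcases Nat.lt_or_ge (2*r+2) m with hlt | hge
      · have hS := ihSr r hlt
        have hU1 := ihU (by omega) r
        have hU2 := ihU (by omega) (r+1)
        rw [hS, hU1, hU2]
        have e1 : m - 1 - 2*r = (m - 2*r - 3) + 2 := by omega
        have e2 : m - 1 - 2*(r+1) = m - 2*r - 3 := by omega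
        have e3 : m - 1 - r = m - r - 1 := by omega
        have e4 : m - 1 - (r+1) = m - r - 2 := by omega
        have e5 : m + 1 - 2*r - 3 = (m - 2*r - 3) + 1 := by omega
        have e6 : m + 1 - r - 1 = m - r := by omega
        have e7 : m + 1 - r - 2 = m - r - 1 := by omega
        have two2 : (2:ℕ)^((m-2*r-3)+2) = 2^(m-2*r-3)*4 := by rw [pow_add]; norm_num
        have two1 : (2:ℕ)^((m-2*r-3)+1) = 2^(m-2*r-3)*2 := by rw [pow_add]; norm_num
        have p1 : (m - r).choose (r+1) = (m - r - 1).choose r + (m - r - 1).choose (r+1) := by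
          have h5 : m - r = (m - r - 1) + 1 := by omega
          conv_lhs => rw [h5]
          rw [Nat.choose_succ_succ, Nat.succ_eq_add_one]
        have p2 : (m - r - 1).choose (r+1) = (m - r - 2).choose r + (m - r - 2).choose (r+1) := by
          have h5 : m - r - 1 = (m - r - 2) + 1 := by omega
          conv_lhs => rw [h5]
          rw [Nat.choose_succ_succ, Nat.succ_eq_add_one]
        rw [e1, e2, e3, e4, e5, e6, e7, two2, two1, p1, p2]
        ring
      · have hm : m = 2*r+2 := by omega
        have hS : SS m (r+1) = 1 := by
          rw [hm, show 2*r+2 = 2*(r+1) from by ring]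
          exact Sdiag (r+1)
        have hU1 := ihU (by omega) r
        have hU2 := ihU (by omega) (r+1)
        rw [hS, hU1, hU2]
        have e1 : m - 1 - 2*r = 1 := by omega
        have e2 : m - 1 - r = r + 1 := by omega
        have e3 : m - 1 - 2*(r+1) = 0 := by omega
        have e4 : m - 1 - (r+1) = r := by omega
        have e5 : m + 1 - 2*r - 3 = 0 := by omega
        have e6 : m + 1 - r - 1 = r + 2 := by omega
        have e7 : m + 1 - r - 2 = r + 1 := by omega
        rw [e1, e2, e3, e4, e5, e6, e7]
        have c1 : (r+1).choose r = r + 1 := by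
          simpa using Nat.choose_succ_self_right r
        have c2 : (r+2).choose (r+1) = r + 2 := by
          simpa using Nat.choose_succ_self_right (r+1)
        have c3 : Nat.choose r (r+1) = 0 := Nat.choose_eq_zero_of_lt (by omega)
        rw [c1, c2, c3]
        ring_nf

theorem moriarty (m r : ℕ) (h : 2 * r < m) :
    (m - r) * ∑ i ∈ Icc r (m / 2), m.choose (2 * i) * i.choose r =
      m * 2 ^ (m - 1 - 2 * r) * (m - r).choose r := by
  have hsum : ∑ i ∈ Icc r (m / 2), m.choose (2 * i) * i.choose r = SS m r := by
    unfold SS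
    apply Finset.sum_subset
    · intro x hx
      rw [Finset.mem_Icc] at hx
      rw [Finset.mem_range]
      omega
    · intro x hx hnx
      rw [Finset.mem_range] at hx
      rw [Finset.mem_Icc] at hnx
      rcases lt_or_ge x r with h1 | h1
      · rw [Nat.choose_eq_zero_of_lt h1, mul_zero]
      · have h2 : m / 2 < x := by
          by_contra hc
          exact hnx ⟨h1, by omega⟩
        rw [Nat.choose_eq_zero_of_lt (by omega : m < 2*x), zero_mul]
  rw [hsum]
  by_cases hr0 : r = 0
  · subst hr0
    rw [(key_s10 m).2.1 (by omega)]
    simp only [Nat.sub_zero, Nat.mul_zero, Nat.choose_zero_right, mul_one]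
  · obtain ⟨r', rfl⟩ : ∃ r', r = r' + 1 := ⟨r - 1, by omega⟩
    rw [(key_s10 m).2.2 r' (by omega)]
    have e1 : m - 1 - 2*(r'+1) = m - 2*r' - 3 := by omega
    have e2 : m - (r'+1) = m - r' - 1 := by omega
    rw [e1, e2]
    have succeq : (m - r' - 1) * (m - r' - 2).choose r' = (m - r' - 1).choose (r'+1) * (r'+1) := by
      have h3 : m - r' - 1 = (m - r' - 2) + 1 := by omega
      rw [h3]
      simpa using Nat.add_one_mul_choose_eq (m - r' - 2) r'
    have main : (m - r' - 1) * ((m - r' - 1).choose (r'+1) + (m - r' - 2).choose r')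
        = m * (m - r' - 1).choose (r'+1) := by
      have hm' : (m - r' - 1) + (r'+1) = m := by omega
      calc (m - r' - 1) * ((m - r' - 1).choose (r'+1) + (m - r' - 2).choose r')
          = (m - r' - 1) * (m - r' - 1).choose (r'+1)
            + (m - r' - 1) * (m - r' - 2).choose r' := by ring
        _ = (m - r' - 1) * (m - r' - 1).choose (r'+1)
            + (m - r' - 1).choose (r'+1) * (r'+1) := by rw [succeq]
        _ = ((m - r' - 1) + (r'+1)) * (m - r' - 1).choose (r'+1) := by ring
        _ = m * (m - r' - 1).choose (r'+1) := by rw [hm']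
    calc (m - r' - 1) * (2 ^ (m - 2*r' - 3)
            * ((m - r' - 1).choose (r'+1) + (m - r' - 2).choose r'))
        = 2 ^ (m - 2*r' - 3) * ((m - r' - 1)
            * ((m - r' - 1).choose (r'+1) + (m - r' - 2).choose r')) := by ring
      _ = 2 ^ (m - 2*r' - 3) * (m * (m - r' - 1).choose (r'+1)) := by rw [main]
      _ = m * 2 ^ (m - 2*r' - 3) * (m - r' - 1).choose (r'+1) := by ring
end
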